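/- arXiv:2602.10310 — 5 statements merged into one kernel-verified Lean document; each statement's English description precedes it below -/
import Mathlib

section
/- Let X be an infinite irreducible topological space in which every singleton is closed and which has only countably many closed subsets. Let (pₙ)ₙ∈ℕ be a sequence in X whose set of terms is dense in X. Then there exists a strictly increasing function σ : ℕ → ℕ such that the subsequence (p_{σ(n)}) is generic, i.e. for every closed subset Z ⊊ X the set {n ∈ ℕ : p_{σ(n)} ∈ Z} is finite. -/
/-- From a dense sequence in an infinite irreducible topological space with closed points and
only countably many closed subsets, one can extract a generic subsequence: one meeting every
proper closed subset only finitely many times. -/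
theorem exists_generic_subsequence (X : Type*) [TopologicalSpace X] [Infinite X]
    [IrreducibleSpace X] [T1Space X] (hcount : {S : Set X | IsClosed S}.Countable)
    (p : ℕ → X) (hdense : Dense (Set.range p)) :
    ∃ σ : ℕ → ℕ, StrictMono σ ∧
      ∀ Z : Set X, IsClosed Z → Z ≠ Set.univ → {n : ℕ | p (σ n) ∈ Z}.Finite := by
  classical
  -- union of two proper closed sets is proper
  have hirr : ∀ A B : Set X, IsClosed A → IsClosed B → A ≠ Set.univ → B ≠ Set.univ →
      A ∪ B ≠ Set.univ := by
    intro A B hA hB hAu hBu h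
    have hpre := (IrreducibleSpace.isIrreducible_univ (X := X)).2
    have hU : (Set.univ ∩ Aᶜ).Nonempty := by
      rw [Set.univ_inter]
      rcases Set.nonempty_compl.2 hAu with ⟨x, hx⟩; exact ⟨x, hx⟩
    have hV : (Set.univ ∩ Bᶜ).Nonempty := by
      rw [Set.univ_inter]
      rcases Set.nonempty_compl.2 hBu with ⟨x, hx⟩; exact ⟨x, hx⟩
    rcases hpre Aᶜ Bᶜ hA.isOpen_compl hB.isOpen_compl hU hV with ⟨x, _, hxa, hxb⟩
    have : x ∈ A ∪ B := h ▸ Set.mem_univ x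
    rcases this with h' | h' <;> [exact hxa h'; exact hxb h']
  -- key step lemma
  have key : ∀ Z : Set X, IsClosed Z → Z ≠ Set.univ → ∀ N : ℕ, ∃ m, N < m ∧ p m ∉ Z := by
    intro Z hZ hZu N
    set F : Set X := p '' {i | i ≤ N} with hF
    have hFfin : F.Finite := (Set.finite_le_nat N).image p
    have hFcl : IsClosed F := hFfin.isClosed
    have hFne : F ≠ Set.univ := by
      intro h
      exact Set.infinite_univ (h ▸ hFfin)
    have hW : Z ∪ F ≠ Set.univ := hirr Z F hZ hFcl hZu hFne
    have hopen : IsOpen (Z ∪ F)ᶜ := (hZ.union hFcl).isOpen_compl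
    have hne : (Z ∪ F)ᶜ.Nonempty := Set.nonempty_compl.2 hW
    rcases hdense.exists_mem_open hopen hne with ⟨x, hxr, hxc⟩
    rcases hxr with ⟨m, rfl⟩
    refine ⟨m, ?_, fun h => hxc (Or.inl h)⟩
    by_contra h
    exact hxc (Or.inr ⟨m, by simpa using Nat.le_of_not_lt h, rfl⟩)
  -- enumerate closed sets
  have hne : {S : Set X | IsClosed S}.Nonempty := ⟨∅, isClosed_empty⟩
  rcases Set.Countable.exists_eq_range hcount hne with ⟨f, hf⟩
  -- g k : proper closed version
  set g : ℕ → Set X := fun k => if f k ≠ Set.univ then f k else ∅ with hg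
  have hgcl : ∀ k, IsClosed (g k) := by
    intro k
    have : f k ∈ {S : Set X | IsClosed S} := hf ▸ Set.mem_range_self k
    simp only [hg]
    by_cases h : f k ≠ Set.univ
    · rw [if_pos h]; exact this
    · rw [if_neg h]; exact isClosed_empty
  have hgu : ∀ k, g k ≠ Set.univ := by
    intro k
    simp only [hg]
    by_cases h : f k ≠ Set.univ
    · rw [if_pos h]; exact h
    · rw [if_neg h]; exact fun h' => Set.infinite_univ (h' ▸ Set.finite_empty)
  -- union up to n is proper closed
  set U : ℕ → Set X := fun n => ⋃ k ∈ Finset.range (n + 1), g k with hU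
  have hUcl : ∀ n, IsClosed (U n) := fun n => Set.Finite.isClosed_biUnion
    (Finset.finite_toSet _) (fun k _ => hgcl k)
  have hUu : ∀ n, U n ≠ Set.univ := by
    intro n
    induction n with
    | zero => simpa [hU] using hgu 0
    | succ n ih =>
      have : U (n + 1) = U n ∪ g (n + 1) := by
        simp only [hU, Finset.range_add_one (n := n + 1)]
        rw [Finset.set_biUnion_insert, Set.union_comm]
      rw [this]
      exact hirr _ _ (hUcl n) (hgcl (n + 1)) ih (hgu (n + 1))
  have keyU : ∀ n N : ℕ, ∃ m, N < m ∧ p m ∉ U n := fun n N => key (U n) (hUcl n) (hUu n) N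
  -- construct σ
  set σ : ℕ → ℕ := fun n => Nat.rec 0 (fun n ih => (keyU n ih).choose) n with hσ
  have hσsucc : ∀ n, σ (n + 1) = (keyU n (σ n)).choose := fun n => rfl
  have hmono : ∀ n, σ n < σ (n + 1) := by
    intro n
    rw [hσsucc]
    exact (keyU n (σ n)).choose_spec.1
  have havoid : ∀ n, p (σ (n + 1)) ∉ U n := by
    intro n
    rw [hσsucc]
    exact (keyU n (σ n)).choose_spec.2
  refine ⟨σ, strictMono_nat_of_lt_succ hmono, ?_⟩
  intro Z hZ hZu
  have : Z ∈ {S : Set X | IsClosed S} := hZ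
  rw [hf] at this
  rcases this with ⟨j, hj⟩
  have hgj : g j = Z := by simp [hg, ← hj, hZu, hj ▸ hZu]
  apply Set.Finite.subset (Set.finite_le_nat (j + 1))
  intro n hn
  by_contra hc
  have hn' : j + 1 < n := Nat.lt_of_not_le hc
  obtain ⟨m, rfl⟩ : ∃ m, n = m + 1 := ⟨n - 1, by omega⟩
  apply havoid m
  refine Set.mem_biUnion (Finset.mem_range.mpr (by omega : j < m + 1)) ?_
  rw [hgj]
  exact hn
end

section
/- Let f be a regular polynomial automorphism of ℂ² of degree d. Then for every q ∈ ℂ² the limit G⁺_f(q) := lim_{n→∞} d^{−n} log⁺ max(|fⁿ(q)₁|, |fⁿ(q)₂|) exists, the function G⁺_f : ℂ² → ℝ is continuous and nonnegative, and it satisfies the functional equation G⁺_f(f(q)) = d · G⁺_f(q) for every q ∈ ℂ². The analogous statements hold for the backward Green function G⁻_f(q) := lim_{n→∞} e^{−n} log⁺ max(|f^{−n}(q)₁|, |f^{−n}(q)₂|), where e = deg f⁻¹, which satisfies G⁻_f(f⁻¹(q)) = e · G⁻_f(q). -/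
open MvPolynomial Filter

noncomputable section

/-- Polynomials in two variables over ℂ. -/
abbrev Poly2 : Type := MvPolynomial (Fin 2) ℂ

/-- The polynomial map `ℂ² → ℂ²` with components `P, Q`. -/
def evalPair (P Q : Poly2) (z : ℂ × ℂ) : ℂ × ℂ :=
  (eval ![z.1, z.2] P, eval ![z.1, z.2] Q)

/-- The degree of the pair `(P, Q)`. -/
def degPair (P Q : Poly2) : ℕ := max P.totalDegree Q.totalDegree

/-- Evaluation at `(x,y)` of the degree-`d` homogeneous part of `F`. -/
def evalHom (d : ℕ) (F : Poly2) (x y : ℂ) : ℂ :=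
  eval ![x, y] (homogeneousComponent d F)

/-- `(P,Q)` and `(P',Q')` define mutually inverse polynomial maps of `ℂ²`. -/
def IsInverseQuad (P Q P' Q' : Poly2) : Prop :=
  (∀ z, evalPair P' Q' (evalPair P Q z) = z) ∧
  (∀ z, evalPair P Q (evalPair P' Q' z) = z)

/-- The polynomial automorphism with components `(P,Q)` and inverse `(P',Q')` is regular. -/
def IsRegularQuad (P Q P' Q' : Poly2) : Prop :=
  2 ≤ degPair P Q ∧ 2 ≤ degPair P' Q' ∧
  ∀ x y : ℂ, (x, y) ≠ ((0 : ℂ), (0 : ℂ)) →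
    ¬(evalHom (degPair P Q) P x y = 0 ∧ evalHom (degPair P Q) Q x y = 0 ∧
      evalHom (degPair P' Q') P' x y = 0 ∧ evalHom (degPair P' Q') Q' x y = 0)

/-- The (constant) Jacobian determinant of the polynomial map `(P,Q)`. -/
def Jac2 (P Q : Poly2) : ℂ :=
  eval ![0, 0] (pderiv 0 P * pderiv 1 Q - pderiv 1 P * pderiv 0 Q)

/-- The set of periodic points of the polynomial map `(P,Q)`. -/
def PerSet (P Q : Poly2) : Set (ℂ × ℂ) :=
  {z | ∃ n : ℕ, 1 ≤ n ∧ (evalPair P Q)^[n] z = z}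

/-- `log⁺ t = max (log t) 0`. -/
def logPlus (t : ℝ) : ℝ := max (Real.log t) 0

/-- Composition `F(R, S)` of a polynomial with a pair of polynomials. -/
def pcomp (F R S : Poly2) : Poly2 := aeval ![R, S] F

/-- The pair of polynomials representing the `n`-th iterate of the map `(P,Q)`. -/
def iterPair (P Q : Poly2) : ℕ → Poly2 × Poly2
  | 0 => (X 0, X 1)
  | n + 1 => (pcomp P (iterPair P Q n).1 (iterPair P Q n).2,
      pcomp Q (iterPair P Q n).1 (iterPair P Q n).2)

/-- The degree of the `n`-th iterate of `(P,Q)`. -/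
def degIter (P Q : Poly2) (n : ℕ) : ℕ := degPair (iterPair P Q n).1 (iterPair P Q n).2



namespace GreenAux

def mnorm (z : ℂ × ℂ) : ℝ := max ‖z.1‖ ‖z.2‖

lemma mnorm_nonneg (z : ℂ × ℂ) : 0 ≤ mnorm z :=
  le_trans (norm_nonneg _) (le_max_left _ _)

lemma continuous_mnorm : Continuous mnorm :=
  (continuous_norm.comp continuous_fst).max
    (continuous_norm.comp continuous_snd)

lemma logPlus_nonneg (t : ℝ) : 0 ≤ logPlus t := le_max_right _ _

lemma logPlus_of_one_le {t : ℝ} (h : 1 ≤ t) : logPlus t = Real.log t :=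
  max_eq_left (Real.log_nonneg h)

lemma logPlus_mono {s t : ℝ} (hs : 0 ≤ s) (h : s ≤ t) : logPlus s ≤ logPlus t := by
  rcases le_or_gt s 1 with h1 | h1
  · exact max_le ((Real.log_nonpos hs h1).trans (logPlus_nonneg t)) (logPlus_nonneg t)
  · rw [logPlus_of_one_le h1.le, logPlus_of_one_le (h1.le.trans h)]
    exact Real.log_le_log (by linarith) h

lemma continuous_logPlus : Continuous logPlus := by
  have h : logPlus = fun t => Real.log (max |t| 1) := by
    funext t
    rcases le_or_gt 1 |t| with h1 | h1
    · rw [max_eq_left h1, Real.log_abs]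
      exact max_eq_left (by rw [← Real.log_abs]; exact Real.log_nonneg h1)
    · rw [max_eq_right h1.le, Real.log_one]
      apply max_eq_right
      rw [← Real.log_abs]
      exact Real.log_nonpos (abs_nonneg t) h1.le
  rw [h]
  apply Real.continuousOn_log.comp_continuous
    ((continuous_abs).max continuous_const)
  intro t
  simp only [Set.mem_compl_iff, Set.mem_singleton_iff]
  intro hc
  have : (1:ℝ) ≤ max |t| 1 := le_max_right _ _
  rw [hc] at this; linarith

lemma eval_smul_homog (S : Poly2) (D : ℕ) (hS : S.IsHomogeneous D) (t : ℂ) (x : Fin 2 → ℂ) :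
    eval (t • x) S = t ^ D * eval x S := by
  rw [eval_eq', eval_eq', Finset.mul_sum]
  apply Finset.sum_congr rfl
  intro s hs
  have h1 := hS (mem_support_iff.mp hs)
  have hdeg : ∑ i, s i = D := by
    rw [Finsupp.weight_apply, Finsupp.sum_fintype] at h1
    · simpa using h1
    · intro i; simp
  calc coeff s S * ∏ i, (t • x) i ^ s i
      = coeff s S * ∏ i, (t ^ s i * x i ^ s i) := by
        apply congrArg; apply Finset.prod_congr rfl; intro i _
        simp [mul_pow]
    _ = t ^ D * (coeff s S * ∏ i, x i ^ s i) := by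
        rw [Finset.prod_mul_distrib, Finset.prod_pow_eq_pow_sum, hdeg]; ring


def coefSum (S : Poly2) : ℝ := ∑ s ∈ S.support, ‖coeff s S‖

lemma coefSum_nonneg (S : Poly2) : 0 ≤ coefSum S :=
  Finset.sum_nonneg fun _ _ => norm_nonneg _

lemma evalBound (S : Poly2) {D : ℕ} (hD : S.totalDegree ≤ D) (z : ℂ × ℂ) :
    ‖eval ![z.1, z.2] S‖ ≤ coefSum S * max 1 (mnorm z) ^ D := by
  set M := max 1 (mnorm z) with hM
  have hM1 : (1:ℝ) ≤ M := le_max_left _ _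
  have hM0 : (0:ℝ) ≤ M := zero_le_one.trans hM1
  rw [eval_eq']
  refine le_trans (norm_sum_le _ _) ?_
  rw [coefSum, Finset.sum_mul]
  apply Finset.sum_le_sum
  intro s hs
  rw [norm_mul]
  apply mul_le_mul_of_nonneg_left ?_ (norm_nonneg _)
  have hterm : ‖∏ i, (![z.1, z.2]) i ^ s i‖ ≤ M ^ (∑ i, s i) := by
    rw [norm_prod, ← Finset.prod_pow_eq_pow_sum]
    apply Finset.prod_le_prod
    · intro i _; positivity
    · intro i _
      rw [norm_pow]
      apply pow_le_pow_left₀ (norm_nonneg _)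
      fin_cases i
      · exact le_trans (le_max_left _ _) (le_max_right _ _)
      · exact le_trans (le_max_right _ _) (le_max_right _ _)
  refine hterm.trans ?_
  apply pow_le_pow_right₀ hM1
  refine le_trans ?_ (le_trans (le_totalDegree hs) hD)
  rw [Finsupp.sum_fintype]
  · intro i; rfl


def lowSum (S : Poly2) (D : ℕ) : ℝ := ∑ i ∈ Finset.range D, coefSum (homogeneousComponent i S)

lemma decomp (S : Poly2) {D : ℕ} (hD : S.totalDegree ≤ D) :
    S - homogeneousComponent D S = ∑ i ∈ Finset.range D, homogeneousComponent i S := by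
  have h : (∑ i ∈ Finset.range (D + 1), homogeneousComponent i S) = S := by
    have h2 : (∑ i ∈ Finset.range (S.totalDegree + 1), homogeneousComponent i S)
        = ∑ i ∈ Finset.range (D + 1), homogeneousComponent i S := by
      apply Finset.sum_subset
      · intro i hi
        simp only [Finset.mem_range] at *
        omega
      · intro i _ hi
        simp only [Finset.mem_range, not_lt] at hi
        exact homogeneousComponent_eq_zero _ _ (by omega)
    exact h2.symm.trans (sum_homogeneousComponent S)
  rw [Finset.sum_range_succ] at h
  linear_combination (norm := module) -h

lemma lowPartBound (S : Poly2) {D : ℕ} (hD : S.totalDegree ≤ D) (hD1 : 1 ≤ D) (z : ℂ × ℂ) :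
    ‖eval ![z.1, z.2] S - eval ![z.1, z.2] (homogeneousComponent D S)‖
      ≤ lowSum S D * max 1 (mnorm z) ^ (D - 1) := by
  have hM1 : (1:ℝ) ≤ max 1 (mnorm z) := le_max_left _ _
  rw [← map_sub, decomp S hD, map_sum, lowSum, Finset.sum_mul]
  refine le_trans (norm_sum_le _ _) (Finset.sum_le_sum fun i hi => ?_)
  refine le_trans (evalBound _ (le_refl _) z) ?_
  apply mul_le_mul_of_nonneg_left ?_ (Finset.sum_nonneg fun _ _ => norm_nonneg _)
  have : (homogeneousComponent i S).totalDegree ≤ D - 1 := by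
    refine le_trans ((homogeneousComponent_isHomogeneous i S).totalDegree_le) ?_
    simp only [Finset.mem_range] at hi; omega
  calc max 1 (mnorm z) ^ (homogeneousComponent i S).totalDegree
      ≤ max 1 (mnorm z) ^ (D - 1) := pow_le_pow_right₀ hM1 this


lemma oneSided (F G : ℂ × ℂ → ℂ × ℂ) (d e : ℕ) (hd : 2 ≤ d) (he : 2 ≤ e)
    (hF : Continuous F) (hGF : ∀ z, G (F z) = z)
    (A : ℝ) (hA1 : 1 ≤ A) (hA : ∀ z, mnorm (F z) ≤ A * max 1 (mnorm z) ^ d)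
    (c R₀ : ℝ) (hc : 0 < c) (hR₀ : 1 ≤ R₀)
    (hL : ∀ z, R₀ ≤ mnorm z →
      c * mnorm z ^ d ≤ mnorm (F z) ∨ c * mnorm z ^ e ≤ mnorm (G z)) :
    ∃ Gp : ℂ × ℂ → ℝ, Continuous Gp ∧ (∀ q, 0 ≤ Gp q) ∧
      (∀ q, Tendsto (fun n : ℕ => ((d : ℝ) ^ n)⁻¹ * logPlus (mnorm (F^[n] q)))
        atTop (nhds (Gp q))) ∧
      ∀ q, Gp (F q) = (d : ℝ) * Gp q := by
  have hdR : (2:ℝ) ≤ (d:ℝ) := by exact_mod_cast hd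
  have hdne : (d:ℝ) ≠ 0 := by linarith
  -- the radius R₁
  set R₁ : ℝ := max (max R₀ 1) (2 / c) with hR₁def
  have hR₁0 : R₀ ≤ R₁ := le_trans (le_max_left _ _) (le_max_left _ _)
  have hR₁1 : (1:ℝ) ≤ R₁ := le_trans (le_max_right _ _) (le_max_left _ _)
  have hcR₁ : 2 ≤ c * R₁ := by
    have h1 : 2 / c ≤ R₁ := le_max_right _ _
    calc (2:ℝ) = c * (2 / c) := by field_simp
    _ ≤ c * R₁ := by apply mul_le_mul_of_nonneg_left h1 hc.le
  -- key power inequality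
  have keypow : ∀ x : ℝ, R₁ ≤ x → ∀ k : ℕ, 2 ≤ k → 2 * x ≤ c * x ^ k := by
    intro x hx k hk
    have hx1 : (1:ℝ) ≤ x := hR₁1.trans hx
    have h1 : 2 ≤ c * x := le_trans hcR₁ (mul_le_mul_of_nonneg_left hx hc.le)
    have h2 : x ≤ x ^ (k - 1) := by
      calc x = x ^ 1 := (pow_one x).symm
      _ ≤ x ^ (k - 1) := pow_le_pow_right₀ hx1 (by omega)
    have h3 : x ^ k = x * x ^ (k - 1) := by
      rw [← pow_succ']
      congr 1
      omega
    calc 2 * x ≤ 2 * x ^ (k-1) := by linarith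
    _ ≤ (c * x) * x ^ (k-1) := by
        apply mul_le_mul_of_nonneg_right h1
        positivity
    _ = c * x ^ k := by rw [h3]; ring
  -- the absorbing set
  set Ω : ℂ × ℂ → Prop := fun w => mnorm w ≤ R₁ ∨ c * mnorm w ^ d ≤ mnorm (F w) with hΩdef
  have growF : ∀ w, R₁ ≤ mnorm w → c * mnorm w ^ d ≤ mnorm (F w) → 2 * mnorm w ≤ mnorm (F w) :=
    fun w h1 h2 => le_trans (keypow _ h1 d hd) h2
  have shrink : ∀ z, ¬ Ω (F z) → 2 * mnorm (F z) ≤ mnorm z := by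
    intro z h
    rw [hΩdef, not_or, not_le] at h
    obtain ⟨h1, h2⟩ := h
    rcases hL (F z) (le_trans hR₁0 h1.le) with h3 | h3
    · exact absurd h3 h2
    · rw [hGF z] at h3
      exact le_trans (keypow _ h1.le e he) h3
  have hΩF : ∀ w, Ω w → Ω (F w) := by
    intro w hw
    by_contra hnot
    have hsh := shrink w hnot
    have hm : R₁ < mnorm (F w) := by
      rw [hΩdef, not_or, not_le] at hnot; exact hnot.1
    rcases hw with hK | hV
    · linarith
    · by_cases hmw : R₁ ≤ mnorm w
      · have hg := growF w hmw hV
        linarith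
      · push_neg at hmw
        linarith
  have persist : ∀ z k n, k ≤ n → Ω (F^[k] z) → Ω (F^[n] z) := by
    intro z k n hkn h
    induction n, hkn using Nat.le_induction with
    | base => exact h
    | succ n hn ih =>
      rw [Function.iterate_succ_apply']
      exact hΩF _ ih
  have entry : ∀ N : ℕ, ∀ z, mnorm z ≤ R₁ * 2 ^ N → ∃ k, k ≤ N ∧ Ω (F^[k] z) := by
    intro N
    induction N with
    | zero =>
      intro z hz
      exact ⟨0, le_refl 0, Or.inl (by simpa using hz)⟩
    | succ N ih =>
      intro z hz
      by_cases h0 : Ω z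
      · exact ⟨0, by omega, h0⟩
      by_cases h1 : Ω (F z)
      · exact ⟨1, by omega, by simpa using h1⟩
      · have hsh := shrink z h1
        have hz' : mnorm (F z) ≤ R₁ * 2 ^ N := by
          rw [pow_succ] at hz
          linarith
        obtain ⟨k, hk, hΩk⟩ := ih (F z) hz'
        exact ⟨k + 1, by omega, by rwa [Function.iterate_succ_apply]⟩
  -- the one-step estimate on Ω
  set C₂ : ℝ := Real.log A + |Real.log c| + 2 * d * Real.log R₁ with hC₂def
  have hlogA : 0 ≤ Real.log A := Real.log_nonneg hA1
  have hlogR : 0 ≤ Real.log R₁ := Real.log_nonneg hR₁1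
  have habs : 0 ≤ |Real.log c| := abs_nonneg _
  have hC₂0 : 0 ≤ C₂ := by
    rw [hC₂def]
    have : 0 ≤ 2 * (d:ℝ) * Real.log R₁ := by positivity
    linarith
  have hstep0 : ∀ w, Ω w → |logPlus (mnorm (F w)) - d * logPlus (mnorm w)| ≤ C₂ := by
    intro w hw
    have h2d : 0 ≤ 2 * (d:ℝ) * Real.log R₁ := by positivity
    by_cases hK : mnorm w ≤ R₁
    · have hY1 : 0 ≤ logPlus (mnorm w) := logPlus_nonneg _
      have hY2 : logPlus (mnorm w) ≤ Real.log R₁ := by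
        rw [← logPlus_of_one_le hR₁1]
        exact logPlus_mono (mnorm_nonneg w) hK
      have hX1 : 0 ≤ logPlus (mnorm (F w)) := logPlus_nonneg _
      have hM : max 1 (mnorm w) ≤ R₁ := max_le hR₁1 hK
      have hM1 : (1:ℝ) ≤ max 1 (mnorm w) := le_max_left _ _
      have hR₁d : (1:ℝ) ≤ R₁ ^ d := one_le_pow₀ hR₁1
      have hX2 : logPlus (mnorm (F w)) ≤ Real.log A + d * Real.log R₁ := by
        have h1 : mnorm (F w) ≤ A * max 1 (mnorm w) ^ d := hA w
        have h2 : A * max 1 (mnorm w) ^ d ≤ A * R₁ ^ d :=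
          mul_le_mul_of_nonneg_left (pow_le_pow_left₀ (by linarith) hM d) (by linarith)
        have h3 : (1:ℝ) ≤ A * R₁ ^ d := by nlinarith
        calc logPlus (mnorm (F w)) ≤ logPlus (A * R₁ ^ d) :=
              logPlus_mono (mnorm_nonneg _) (h1.trans h2)
        _ = Real.log (A * R₁ ^ d) := logPlus_of_one_le h3
        _ = Real.log A + d * Real.log R₁ := by
            rw [Real.log_mul (by linarith) (by positivity), Real.log_pow]
      have hdY : (d:ℝ) * logPlus (mnorm w) ≤ d * Real.log R₁ :=
        mul_le_mul_of_nonneg_left hY2 (by linarith)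
      have hdY0 : 0 ≤ (d:ℝ) * logPlus (mnorm w) := by positivity
      rw [abs_le, hC₂def]
      constructor <;> linarith
    · push_neg at hK
      have hV : c * mnorm w ^ d ≤ mnorm (F w) := hw.resolve_left (not_le.mpr hK)
      have hm1 : 1 ≤ mnorm w := hR₁1.trans hK.le
      have hmpos : 0 < mnorm w := by linarith
      have hg : 2 * mnorm w ≤ mnorm (F w) := growF w hK.le hV
      have hFw1 : 1 ≤ mnorm (F w) := by linarith
      have hup : mnorm (F w) ≤ A * mnorm w ^ d := by
        have := hA w
        rwa [max_eq_right hm1] at this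
      rw [logPlus_of_one_le hFw1, logPlus_of_one_le hm1]
      have hlow : Real.log c + d * Real.log (mnorm w) ≤ Real.log (mnorm (F w)) := by
        rw [← Real.log_pow, ← Real.log_mul (ne_of_gt hc) (by positivity)]
        exact Real.log_le_log (by positivity) hV
      have hupl : Real.log (mnorm (F w)) ≤ Real.log A + d * Real.log (mnorm w) := by
        rw [← Real.log_pow, ← Real.log_mul (by linarith) (by positivity)]
        exact Real.log_le_log (by positivity) hup
      have hcabs1 : Real.log c ≤ |Real.log c| := le_abs_self _
      have hcabs2 : -|Real.log c| ≤ Real.log c := neg_abs_le _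
      rw [abs_le, hC₂def]
      constructor <;> linarith
  -- the sequence
  set u : ℕ → (ℂ × ℂ) → ℝ := fun n z => ((d : ℝ) ^ n)⁻¹ * logPlus (mnorm (F^[n] z))
    with hudef
  have hu_nonneg : ∀ n z, 0 ≤ u n z := fun n z =>
    mul_nonneg (by positivity) (logPlus_nonneg _)
  have huC : ∀ n, Continuous (u n) := fun n =>
    continuous_const.mul (continuous_logPlus.comp (continuous_mnorm.comp (hF.iterate n)))
  have hstep : ∀ z n, Ω (F^[n] z) → |u (n+1) z - u n z| ≤ C₂ * ((1:ℝ)/2) ^ (n+1) := by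
    intro z n hΩn
    have hF1 : F^[n+1] z = F (F^[n] z) := Function.iterate_succ_apply' F n z
    have key := hstep0 _ hΩn
    have heq : u (n+1) z - u n z
        = ((d:ℝ)^(n+1))⁻¹ * (logPlus (mnorm (F (F^[n] z))) - d * logPlus (mnorm (F^[n] z))) := by
      rw [hudef]
      simp only
      rw [hF1, pow_succ]
      field_simp
    have hppos : (0:ℝ) < (d:ℝ)^(n+1) := by positivity
    have hle : ((d:ℝ)^(n+1))⁻¹ ≤ ((1:ℝ)/2)^(n+1) := by
      have h1 : (2:ℝ)^(n+1) ≤ (d:ℝ)^(n+1) := pow_le_pow_left₀ (by norm_num) hdR (n+1)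
      have h2 : ((1:ℝ)/2)^(n+1) = ((2:ℝ)^(n+1))⁻¹ := by
        rw [one_div, inv_pow]
      rw [h2]
      exact inv_anti₀ (by positivity) h1
    rw [heq, abs_mul, abs_of_nonneg (by positivity : (0:ℝ) ≤ ((d:ℝ)^(n+1))⁻¹)]
    calc ((d:ℝ)^(n+1))⁻¹ * |logPlus (mnorm (F (F^[n] z))) - d * logPlus (mnorm (F^[n] z))|
        ≤ ((1:ℝ)/2)^(n+1) * C₂ := by
          apply mul_le_mul hle key (abs_nonneg _) (by positivity)
    _ = C₂ * ((1:ℝ)/2)^(n+1) := by ring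
  have htail : ∀ z n, Ω (F^[n] z) → ∀ k, |u (n+k) z - u n z| ≤ C₂ * ((1:ℝ)/2)^n := by
    intro z n hΩ k
    have main : ∀ k : ℕ, |u (n+k) z - u n z| ≤ C₂ * ((1:ℝ)/2)^n * (1 - ((1:ℝ)/2)^k) := by
      intro k
      induction k with
      | zero => simp
      | succ k ih =>
        have hΩk : Ω (F^[n+k] z) := persist z n (n+k) (by omega) hΩ
        have h1 := hstep z (n+k) hΩk
        calc |u (n+(k+1)) z - u n z|
            ≤ |u (n+k+1) z - u (n+k) z| + |u (n+k) z - u n z| := abs_sub_le _ _ _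
        _ ≤ C₂ * ((1:ℝ)/2)^(n+k+1) + C₂ * ((1:ℝ)/2)^n * (1 - ((1:ℝ)/2)^k) :=
            add_le_add h1 ih
        _ = C₂ * ((1:ℝ)/2)^n * (1 - ((1:ℝ)/2)^(k+1)) := by
            rw [show n+k+1 = n+(k+1) by omega, pow_add, pow_succ]
            ring
    have hk0 : (0:ℝ) ≤ ((1:ℝ)/2)^k := by positivity
    have hn0 : (0:ℝ) ≤ ((1:ℝ)/2)^n := by positivity
    have h4 := main k
    nlinarith [mul_nonneg (mul_nonneg hC₂0 hn0) hk0]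
  -- convergence
  have hconv : ∀ z, ∃ L, Tendsto (fun n => u n z) atTop (nhds L) := by
    intro z
    obtain ⟨N, hN⟩ := pow_unbounded_of_one_lt (mnorm z) (one_lt_two (α := ℝ))
    have hzN : mnorm z ≤ R₁ * 2 ^ N := by
      have h2 : (2:ℝ)^N ≤ R₁ * 2^N := by nlinarith [pow_pos (zero_lt_two (α := ℝ)) N]
      linarith
    obtain ⟨k, hkN, hΩk⟩ := entry N z hzN
    have hg : CauchySeq (fun j => u (j + k) z) := by
      apply cauchySeq_of_le_geometric (1/2 : ℝ) (C₂ * ((1:ℝ)/2)^(k+1)) (by norm_num)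
      intro j
      rw [Real.dist_eq]
      have hΩj : Ω (F^[j+k] z) := persist z k (j+k) (by omega) hΩk
      have h1 := hstep z (j+k) hΩj
      have heq : j+1+k = j+k+1 := by omega
      rw [heq, abs_sub_comm]
      refine h1.trans (le_of_eq ?_)
      rw [show j+k+1 = (k+1)+j by omega, pow_add]
      ring
    obtain ⟨L, hLg⟩ := cauchySeq_tendsto_of_complete hg
    exact ⟨L, (tendsto_add_atTop_iff_nat k).mp hLg⟩
  choose Gp hGp using hconv
  -- tail estimate against the limit
  have hGtail : ∀ z (N n : ℕ), mnorm z ≤ R₁ * 2^N → N ≤ n →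
      |Gp z - u n z| ≤ C₂ * ((1:ℝ)/2)^n := by
    intro z N n hz hNn
    obtain ⟨k, hkN, hΩk⟩ := entry N z hz
    have hΩn : Ω (F^[n] z) := persist z k n (by omega) hΩk
    have h1 : Tendsto (fun j => u (n + j) z) atTop (nhds (Gp z)) := by
      have h2 : Tendsto (fun j : ℕ => j + n) atTop atTop := tendsto_add_atTop_nat n
      exact ((hGp z).comp h2).congr (fun j => by rw [Function.comp_apply, Nat.add_comm])
    have h2 : Tendsto (fun j => |u (n + j) z - u n z|) atTop
        (nhds (|Gp z - u n z|)) := (h1.sub tendsto_const_nhds).abs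
    exact le_of_tendsto h2 (Eventually.of_forall fun j => htail z n hΩn j)
  -- continuity
  have hGpc : Continuous Gp := by
    rw [continuous_iff_continuousAt]
    intro z₀
    set U : Set (ℂ × ℂ) := {z | mnorm z < mnorm z₀ + 1} with hUdef
    have hUopen : IsOpen U := isOpen_lt continuous_mnorm continuous_const
    have hz₀U : z₀ ∈ U := by simp [hUdef]
    obtain ⟨N, hN⟩ := pow_unbounded_of_one_lt (mnorm z₀ + 1) (one_lt_two (α := ℝ))
    have hMN : ∀ z ∈ U, mnorm z ≤ R₁ * 2 ^ N := by
      intro z hz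
      have h2 : (2:ℝ)^N ≤ R₁ * 2^N := by nlinarith [pow_pos (zero_lt_two (α := ℝ)) N]
      have : mnorm z < mnorm z₀ + 1 := hz
      linarith
    have hTU : TendstoUniformlyOn u Gp atTop U := by
      rw [Metric.tendstoUniformlyOn_iff]
      intro ε hε
      have hto : Tendsto (fun n : ℕ => C₂ * ((1:ℝ)/2)^n) atTop (nhds 0) := by
        have := (tendsto_pow_atTop_nhds_zero_of_lt_one
          (by norm_num : (0:ℝ) ≤ 1/2) (by norm_num : (1:ℝ)/2 < 1)).const_mul C₂
        simpa using this
      have hev : ∀ᶠ n : ℕ in atTop, C₂ * ((1:ℝ)/2)^n < ε := hto.eventually_lt_const hε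
      filter_upwards [hev, eventually_ge_atTop N] with n hn hNn
      intro z hz
      rw [Real.dist_eq]
      exact lt_of_le_of_lt (hGtail z N n (hMN z hz) hNn) hn
    have hcont : ContinuousOn Gp U :=
      hTU.continuousOn (Eventually.of_forall fun n => (huC n).continuousOn).frequently
    exact hcont.continuousAt (hUopen.mem_nhds hz₀U)
  -- nonnegativity
  have hGp0 : ∀ q, 0 ≤ Gp q := fun q =>
    ge_of_tendsto (hGp q) (Eventually.of_forall fun n => hu_nonneg n q)
  -- functional equation
  have hfe : ∀ q, Gp (F q) = (d:ℝ) * Gp q := by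
    intro q
    have h1 : ∀ n, u n (F q) = (d:ℝ) * u (n+1) q := by
      intro n
      rw [hudef]
      simp only
      rw [← Function.iterate_succ_apply F n q, pow_succ]
      field_simp
    have h3 : Tendsto (fun n => u (n+1) q) atTop (nhds (Gp q)) :=
      (hGp q).comp (tendsto_add_atTop_nat 1)
    have h2 : Tendsto (fun n => u n (F q)) atTop (nhds ((d:ℝ) * Gp q)) :=
      (h3.const_mul _).congr (fun n => (h1 n).symm)
    exact tendsto_nhds_unique (hGp (F q)) h2
  exact ⟨Gp, hGpc, hGp0, hGp, hfe⟩


lemma lowSum_nonneg (S : Poly2) (D : ℕ) : 0 ≤ lowSum S D :=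
  Finset.sum_nonneg fun _ _ => coefSum_nonneg _

lemma continuous_vec : Continuous (fun z : ℂ × ℂ => (![z.1, z.2] : Fin 2 → ℂ)) := by
  apply continuous_pi
  intro i
  fin_cases i
  · simpa using continuous_fst
  · simpa using continuous_snd

lemma continuous_evalP (S : Poly2) : Continuous (fun z : ℂ × ℂ => eval ![z.1, z.2] S) :=
  (MvPolynomial.continuous_eval (p := S)).comp continuous_vec

lemma continuous_evalPair (P Q : Poly2) : Continuous (evalPair P Q) :=
  (continuous_evalP P).prodMk (continuous_evalP Q)

lemma pairBound (P Q : Poly2) (z : ℂ × ℂ) :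
    mnorm (evalPair P Q z) ≤ (coefSum P + coefSum Q + 1) * max 1 (mnorm z) ^ degPair P Q := by
  have hM : (0:ℝ) ≤ max 1 (mnorm z) ^ degPair P Q := by positivity
  have h1 := evalBound P (le_max_left P.totalDegree Q.totalDegree) z
  have h2 := evalBound Q (le_max_right P.totalDegree Q.totalDegree) z
  have hQ0 := coefSum_nonneg Q
  have hP0 := coefSum_nonneg P
  apply max_le
  · refine h1.trans ?_
    apply mul_le_mul_of_nonneg_right (by linarith) hM
  · refine h2.trans ?_
    apply mul_le_mul_of_nonneg_right (by linarith) hM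

lemma regular_lower (P Q P' Q' : Poly2) (hreg : IsRegularQuad P Q P' Q') :
    ∃ c R₀ : ℝ, 0 < c ∧ 1 ≤ R₀ ∧ ∀ z, R₀ ≤ mnorm z →
      c * mnorm z ^ degPair P Q ≤ mnorm (evalPair P Q z) ∨
      c * mnorm z ^ degPair P' Q' ≤ mnorm (evalPair P' Q' z) := by
  obtain ⟨hd2, he2, hne⟩ := hreg
  set d := degPair P Q
  set e := degPair P' Q'
  set S1 : Set (ℂ × ℂ) := mnorm ⁻¹' {1} with hS1def
  set Φ : ℂ × ℂ → ℝ := fun v =>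
    max (max (‖eval ![v.1, v.2] (homogeneousComponent d P)‖)
             (‖eval ![v.1, v.2] (homogeneousComponent d Q)‖))
        (max (‖eval ![v.1, v.2] (homogeneousComponent e P')‖)
             (‖eval ![v.1, v.2] (homogeneousComponent e Q')‖)) with hΦdef
  have hΦc : Continuous Φ := by
    apply Continuous.max <;> apply Continuous.max <;>
      exact continuous_norm.comp (continuous_evalP _)
  have hS1closed : IsClosed S1 := isClosed_singleton.preimage continuous_mnorm
  have hS1sub : S1 ⊆ Metric.closedBall 0 1 := by
    intro v hv
    have hv1 : mnorm v = 1 := hv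
    rw [Metric.mem_closedBall, dist_zero_right, Prod.norm_def]
    exact le_of_eq hv1
  have hS1cpt : IsCompact S1 :=
    IsCompact.of_isClosed_subset (isCompact_closedBall 0 1) hS1closed hS1sub
  have hS1ne : S1.Nonempty := by
    refine ⟨(1, 0), ?_⟩
    show mnorm (1, 0) = 1
    simp [mnorm]
  obtain ⟨v₀, hv₀S, hv₀min⟩ := hS1cpt.exists_isMinOn hS1ne hΦc.continuousOn
  set c₀ := Φ v₀ with hc₀def
  have hc₀pos : 0 < c₀ := by
    rcases lt_or_ge 0 c₀ with h | h
    · exact h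
    · exfalso
      have hv₀1 : mnorm v₀ = 1 := hv₀S
      have habs : ∀ x : ℂ, ‖x‖ ≤ 0 → x = 0 := fun x hx =>
        norm_eq_zero.mp (le_antisymm hx (norm_nonneg x))
      have h1 : ‖eval ![v₀.1, v₀.2] (homogeneousComponent d P)‖ ≤ c₀ :=
        le_trans (le_max_left _ _) (le_max_left _ _)
      have h2 : ‖eval ![v₀.1, v₀.2] (homogeneousComponent d Q)‖ ≤ c₀ :=
        le_trans (le_max_right _ _) (le_max_left _ _)
      have h3 : ‖eval ![v₀.1, v₀.2] (homogeneousComponent e P')‖ ≤ c₀ :=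
        le_trans (le_max_left _ _) (le_max_right _ _)
      have h4 : ‖eval ![v₀.1, v₀.2] (homogeneousComponent e Q')‖ ≤ c₀ :=
        le_trans (le_max_right _ _) (le_max_right _ _)
      have hv₀ne : (v₀.1, v₀.2) ≠ ((0:ℂ), (0:ℂ)) := by
        intro hEq
        have : v₀ = ((0:ℂ), (0:ℂ)) := by
          rw [← hEq]
        rw [this] at hv₀1
        simp [mnorm] at hv₀1
      exact hne v₀.1 v₀.2 hv₀ne
        ⟨habs _ (h1.trans h), habs _ (h2.trans h), habs _ (h3.trans h), habs _ (h4.trans h)⟩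
  set B : ℝ := max (max (lowSum P d) (lowSum Q d)) (max (lowSum P' e) (lowSum Q' e)) with hBdef
  have hB0 : 0 ≤ B := le_trans (lowSum_nonneg P d) (le_trans (le_max_left _ _) (le_max_left _ _))
  refine ⟨c₀ / 2, max 1 (2 * B / c₀ + 1), by positivity, le_max_left _ _, ?_⟩
  intro z hz
  have hm1 : (1:ℝ) ≤ mnorm z := le_trans (le_max_left _ _) hz
  have hm0 : (0:ℝ) < mnorm z := by linarith
  have hmB : B ≤ c₀ / 2 * mnorm z := by
    have h1 : 2 * B / c₀ + 1 ≤ mnorm z := le_trans (le_max_right _ _) hz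
    have h2 : 2 * B / c₀ ≤ mnorm z := by linarith
    rw [div_le_iff₀ hc₀pos] at h2
    linarith
  set mz : ℝ := mnorm z with hmzdef
  set v : ℂ × ℂ := (z.1 / (mz : ℂ), z.2 / (mz : ℂ)) with hvdef
  have hmzC : (mz : ℂ) ≠ 0 := Complex.ofReal_ne_zero.mpr (ne_of_gt hm0)
  have hvS1 : v ∈ S1 := by
    show mnorm v = 1
    rw [hvdef, mnorm]
    simp only [norm_div, Complex.norm_real, Real.norm_eq_abs, abs_of_pos hm0]
    rw [max_div_div_right hm0.le]
    rw [← mnorm]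
    field_simp
    exact hmzdef.symm
  have hscale : ∀ (S : Poly2) (D : ℕ),
      ‖eval ![z.1, z.2] (homogeneousComponent D S)‖
      = mz ^ D * ‖eval ![v.1, v.2] (homogeneousComponent D S)‖ := by
    intro S D
    have hsc : ((mz : ℂ)) • (![v.1, v.2] : Fin 2 → ℂ) = ![z.1, z.2] := by
      funext i
      fin_cases i <;>
        simp [hvdef, Pi.smul_apply, smul_eq_mul, mul_div_cancel₀, hmzC] <;>
        field_simp
    rw [← hsc, eval_smul_homog _ D (homogeneousComponent_isHomogeneous D S), norm_mul, norm_pow,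
      Complex.norm_real, Real.norm_eq_abs, abs_of_pos hm0]
  have bigcomp : ∀ (S : Poly2) (D : ℕ), 1 ≤ D → S.totalDegree ≤ D → lowSum S D ≤ B →
      c₀ ≤ ‖eval ![v.1, v.2] (homogeneousComponent D S)‖ →
      c₀ / 2 * mz ^ D ≤ ‖eval ![z.1, z.2] S‖ := by
    intro S D hD1 hDS hlow hbig
    have h1 : c₀ * mz ^ D ≤ ‖eval ![z.1, z.2] (homogeneousComponent D S)‖ := by
      rw [hscale S D]
      have : (0:ℝ) ≤ mz ^ D := by positivity
      nlinarith
    have h2 := lowPartBound S hDS hD1 z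
    rw [max_eq_right hm1] at h2
    have h3 : ‖eval ![z.1, z.2] (homogeneousComponent D S)‖
        ≤ ‖eval ![z.1, z.2] S‖
          + ‖eval ![z.1, z.2] S - eval ![z.1, z.2] (homogeneousComponent D S)‖ := by
      have h4 := norm_add_le (eval ![z.1, z.2] S)
        (eval ![z.1, z.2] (homogeneousComponent D S) - eval ![z.1, z.2] S)
      have h5 : eval ![z.1, z.2] S + (eval ![z.1, z.2] (homogeneousComponent D S)
          - eval ![z.1, z.2] S) = eval ![z.1, z.2] (homogeneousComponent D S) := by ring
      rw [h5] at h4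
      rw [norm_sub_rev] at h4
      exact h4
    have hpow : mz ^ D = mz ^ (D - 1) * mz := by
      rw [← pow_succ]
      congr 1
      omega
    have hpownn : (0:ℝ) ≤ mz ^ (D - 1) := by positivity
    have hBlow : lowSum S D * mz ^ (D-1) ≤ c₀ / 2 * mz ^ D := by
      rw [hpow]
      have : lowSum S D ≤ c₀ / 2 * mz := le_trans hlow hmB
      nlinarith [lowSum_nonneg S D]
    linarith
  have hΦv : c₀ ≤ Φ v := hv₀min hvS1
  have hPd : P.totalDegree ≤ d := le_max_left _ _
  have hQd : Q.totalDegree ≤ d := le_max_right _ _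
  have hP'e : P'.totalDegree ≤ e := le_max_left _ _
  have hQ'e : Q'.totalDegree ≤ e := le_max_right _ _
  have hd1 : 1 ≤ d := by omega
  have he1 : 1 ≤ e := by omega
  have hmnP : ∀ S T : Poly2, ‖eval ![z.1, z.2] S‖ ≤ mnorm (evalPair S T z) :=
    fun S T => le_max_left _ _
  have hmnQ : ∀ S T : Poly2, ‖eval ![z.1, z.2] T‖ ≤ mnorm (evalPair S T z) :=
    fun S T => le_max_right _ _
  rw [hΦdef] at hΦv
  rcases le_max_iff.mp hΦv with h | h
  · rcases le_max_iff.mp h with h' | h'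
    · exact Or.inl (le_trans (bigcomp P d hd1 hPd
        (le_trans (le_max_left _ _) (le_max_left _ _)) h') (hmnP P Q))
    · exact Or.inl (le_trans (bigcomp Q d hd1 hQd
        (le_trans (le_max_right _ _) (le_max_left _ _)) h') (hmnQ P Q))
  · rcases le_max_iff.mp h with h' | h'
    · exact Or.inr (le_trans (bigcomp P' e he1 hP'e
        (le_trans (le_max_left _ _) (le_max_right _ _)) h') (hmnP P' Q'))
    · exact Or.inr (le_trans (bigcomp Q' e he1 hQ'e
        (le_trans (le_max_right _ _) (le_max_right _ _)) h') (hmnQ P' Q'))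

end GreenAux

/-- Existence, continuity, nonnegativity and the functional equation of the forward and
backward Green functions of a regular polynomial automorphism of `ℂ²`. -/
theorem green_functions_exist (P Q P' Q' : Poly2)
    (hinv : IsInverseQuad P Q P' Q') (hreg : IsRegularQuad P Q P' Q') :
    (∃ Gp : ℂ × ℂ → ℝ, Continuous Gp ∧ (∀ q, 0 ≤ Gp q) ∧
      (∀ q : ℂ × ℂ, Tendsto (fun n : ℕ =>
          ((degPair P Q : ℝ) ^ n)⁻¹ *
            logPlus (max ‖((evalPair P Q)^[n] q).1‖
              ‖((evalPair P Q)^[n] q).2‖))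
        atTop (nhds (Gp q))) ∧
      ∀ q : ℂ × ℂ, Gp (evalPair P Q q) = (degPair P Q : ℝ) * Gp q) ∧
    (∃ Gm : ℂ × ℂ → ℝ, Continuous Gm ∧ (∀ q, 0 ≤ Gm q) ∧
      (∀ q : ℂ × ℂ, Tendsto (fun n : ℕ =>
          ((degPair P' Q' : ℝ) ^ n)⁻¹ *
            logPlus (max ‖((evalPair P' Q')^[n] q).1‖
              ‖((evalPair P' Q')^[n] q).2‖))
        atTop (nhds (Gm q))) ∧
      ∀ q : ℂ × ℂ, Gm (evalPair P' Q' q) = (degPair P' Q' : ℝ) * Gm q) := by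
  obtain ⟨c, R₀, hc, hR₀, hL⟩ := GreenAux.regular_lower P Q P' Q' hreg
  have hd2 := hreg.1
  have he2 := hreg.2.1
  have hP0 := GreenAux.coefSum_nonneg P
  have hQ0 := GreenAux.coefSum_nonneg Q
  have hP'0 := GreenAux.coefSum_nonneg P'
  have hQ'0 := GreenAux.coefSum_nonneg Q'
  constructor
  · obtain ⟨Gp, h1, h2, h3, h4⟩ := GreenAux.oneSided (evalPair P Q) (evalPair P' Q')
      (degPair P Q) (degPair P' Q') hd2 he2 (GreenAux.continuous_evalPair P Q) hinv.1
      (GreenAux.coefSum P + GreenAux.coefSum Q + 1) (by linarith)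
      (GreenAux.pairBound P Q) c R₀ hc hR₀ hL
    exact ⟨Gp, h1, h2, h3, h4⟩
  · obtain ⟨Gm, h1, h2, h3, h4⟩ := GreenAux.oneSided (evalPair P' Q') (evalPair P Q)
      (degPair P' Q') (degPair P Q) he2 hd2 (GreenAux.continuous_evalPair P' Q') hinv.2
      (GreenAux.coefSum P' + GreenAux.coefSum Q' + 1) (by linarith)
      (GreenAux.pairBound P' Q') c R₀ hc hR₀
      (fun z hz => Or.symm (hL z hz))
    exact ⟨Gm, h1, h2, h3, h4⟩
end
end

section
/- Let f = (f_b) and g = (g_b) be two dynamically independent families of regular plane polynomial automorphisms parametrized by the same curve V. Then the set of parameters {b ∈ V(ℂ) : there exist integers n, m ≥ 1 with f_bⁿ = g_b^m} is countable. -/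
open MvPolynomial Filter

noncomputable section

/-- The complex points `V(ℂ)` of the affine variety cut out by the ideal `I` over `K`. -/
def Vcx (K : IntermediateField ℚ ℂ) (m : ℕ) (I : Ideal (MvPolynomial (Fin m) K)) :
    Set (Fin m → ℂ) :=
  {b | ∀ p ∈ I, eval b (MvPolynomial.map (algebraMap K ℂ) p) = 0}

/-- The `K̄`-points `V(K̄)`: points of `V(ℂ)` with all coordinates algebraic over `K`. -/
def VKbar (K : IntermediateField ℚ ℂ) (m : ℕ) (I : Ideal (MvPolynomial (Fin m) K)) :
    Set (Fin m → ℂ) :=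
  {b | b ∈ Vcx K m I ∧ ∀ i, IsAlgebraic K (b i)}

/-- Specialization at the parameter `b` of a polynomial in `K[t₁,…,t_m][x,y]`. -/
def specpoly (K : IntermediateField ℚ ℂ) (m : ℕ) (b : Fin m → ℂ)
    (F : MvPolynomial (Fin m ⊕ Fin 2) K) : Poly2 :=
  aeval (Sum.elim (fun i => MvPolynomial.C (b i)) MvPolynomial.X)
    (MvPolynomial.map (algebraMap K ℂ) F)

/-- A family of regular plane polynomial automorphisms parametrized by the curve `V`. -/
structure RegFamily (K : IntermediateField ℚ ℂ) (m : ℕ)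
    (I : Ideal (MvPolynomial (Fin m) K)) where
  P : MvPolynomial (Fin m ⊕ Fin 2) K
  Q : MvPolynomial (Fin m ⊕ Fin 2) K
  P' : MvPolynomial (Fin m ⊕ Fin 2) K
  Q' : MvPolynomial (Fin m ⊕ Fin 2) K
  isAuto : ∀ b ∈ Vcx K m I,
    IsInverseQuad (specpoly K m b P) (specpoly K m b Q)
      (specpoly K m b P') (specpoly K m b Q') ∧
    IsRegularQuad (specpoly K m b P) (specpoly K m b Q)
      (specpoly K m b P') (specpoly K m b Q')

/-- The map `f_b : ℂ² → ℂ²` at the parameter `b`. -/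
def famMap {K : IntermediateField ℚ ℂ} {m : ℕ} {I : Ideal (MvPolynomial (Fin m) K)}
    (f : RegFamily K m I) (b : Fin m → ℂ) : ℂ × ℂ → ℂ × ℂ :=
  evalPair (specpoly K m b f.P) (specpoly K m b f.Q)

/-- The set of periodic points of `f_b`. -/
def famPer {K : IntermediateField ℚ ℂ} {m : ℕ} {I : Ideal (MvPolynomial (Fin m) K)}
    (f : RegFamily K m I) (b : Fin m → ℂ) : Set (ℂ × ℂ) :=
  PerSet (specpoly K m b f.P) (specpoly K m b f.Q)

/-- The Jacobian of `f_b`. -/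
def famJac {K : IntermediateField ℚ ℂ} {m : ℕ} {I : Ideal (MvPolynomial (Fin m) K)}
    (f : RegFamily K m I) (b : Fin m → ℂ) : ℂ :=
  Jac2 (specpoly K m b f.P) (specpoly K m b f.Q)

/-- Two families are dynamically independent if no iterates agree along the whole family. -/
def DynIndependent {K : IntermediateField ℚ ℂ} {m : ℕ} {I : Ideal (MvPolynomial (Fin m) K)}
    (f g : RegFamily K m I) : Prop :=
  ¬ ∃ n k : ℕ, 1 ≤ n ∧ 1 ≤ k ∧ ∀ b ∈ Vcx K m I, (famMap f b)^[n] = (famMap g b)^[k]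


set_option maxHeartbeats 1000000 in
lemma aeval_eq_eval_map {K : IntermediateField ℚ ℂ} {m : ℕ} (b : Fin m → ℂ)
    (p : MvPolynomial (Fin m) K) :
    (aeval b) p = eval b (MvPolynomial.map (algebraMap K ℂ) p) := by
  rw [eval_map, aeval_def]

lemma no_chain {A : Type*} [CommRing A] (hdim : ringKrullDim A = 1)
    (q0 q1 q2 : PrimeSpectrum A) (h01 : q0 < q1) (h12 : q1 < q2) : False := by
  let p : LTSeries (PrimeSpectrum A) :=
    ⟨2, ![q0, q1, q2], by
      intro i
      fin_cases i <;> simpa using by assumption⟩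
  have h := Order.LTSeries.length_le_krullDim p
  have he : ringKrullDim A = Order.krullDim (PrimeSpectrum A) := rfl
  rw [← he, hdim] at h
  have hlen : p.length = 2 := rfl
  rw [hlen] at h
  norm_num at h

set_option maxHeartbeats 1000000 in
lemma algebraic_of_extra_zero {K : IntermediateField ℚ ℂ} [FiniteDimensional ℚ K] {m : ℕ}
    {I : Ideal (MvPolynomial (Fin m) K)} (hI : I.IsPrime)
    (hdim : ringKrullDim (MvPolynomial (Fin m) K ⧸ I) = 1)
    (b : Fin m → ℂ) (hb : b ∈ Vcx K m I)
    (e : MvPolynomial (Fin m) K) (heI : e ∉ I) (heb : aeval b e = 0) :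
    ∀ i, IsAlgebraic ℚ (b i) := by
  classical
  let φ : MvPolynomial (Fin m) K →+* ℂ := (aeval b : MvPolynomial (Fin m) K →ₐ[K] ℂ).toRingHom
  have hφ : ∀ p, φ p = aeval b p := fun p => rfl
  let J : Ideal (MvPolynomial (Fin m) K) := RingHom.ker φ
  have hmemJ : ∀ p, p ∈ J ↔ aeval b p = 0 := fun p => RingHom.mem_ker
  have hJp : J.IsPrime := RingHom.ker_isPrime _
  have hIJ : I ≤ J := by
    intro p hp
    rw [hmemJ, aeval_eq_eval_map]
    exact hb p hp
  have heJ : e ∈ J := (hmemJ e).mpr heb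
  obtain ⟨M, hM, hJM⟩ := J.exists_le_maximal hJp.ne_top
  have hJM' : J = M := by
    by_contra hne
    haveI := hI
    have hker : RingHom.ker (Ideal.Quotient.mk I) ≤ J := by rw [Ideal.mk_ker]; exact hIJ
    have hkerM : RingHom.ker (Ideal.Quotient.mk I) ≤ M := by
      rw [Ideal.mk_ker]; exact hIJ.trans hJM
    haveI hq1 : (Ideal.map (Ideal.Quotient.mk I) J).IsPrime :=
      Ideal.map_isPrime_of_surjective Ideal.Quotient.mk_surjective hker
    haveI hq2 : (Ideal.map (Ideal.Quotient.mk I) M).IsPrime :=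
      Ideal.map_isPrime_of_surjective Ideal.Quotient.mk_surjective hkerM
    have hcomapJ : Ideal.comap (Ideal.Quotient.mk I) (Ideal.map (Ideal.Quotient.mk I) J) = J := by
      rw [Ideal.comap_map_of_surjective _ Ideal.Quotient.mk_surjective,
        ← RingHom.ker_eq_comap_bot]
      exact sup_eq_left.mpr hker
    have hcomapM : Ideal.comap (Ideal.Quotient.mk I) (Ideal.map (Ideal.Quotient.mk I) M) = M := by
      rw [Ideal.comap_map_of_surjective _ Ideal.Quotient.mk_surjective,
        ← RingHom.ker_eq_comap_bot]
      exact sup_eq_left.mpr hkerM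
    refine no_chain hdim ⟨⊥, Ideal.bot_prime⟩ ⟨_, hq1⟩ ⟨Ideal.map (Ideal.Quotient.mk I) M, hq2⟩ ?_ ?_
    · rw [← PrimeSpectrum.asIdeal_lt_asIdeal]
      show (⊥ : Ideal _) < Ideal.map (Ideal.Quotient.mk I) J
      refine lt_of_le_of_ne bot_le ?_
      intro h'
      apply heI
      have hmem : Ideal.Quotient.mk I e ∈ Ideal.map (Ideal.Quotient.mk I) J :=
        Ideal.mem_map_of_mem _ heJ
      rw [← h', Ideal.mem_bot] at hmem
      rwa [← Ideal.Quotient.eq_zero_iff_mem]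
    · rw [← PrimeSpectrum.asIdeal_lt_asIdeal]
      show Ideal.map (Ideal.Quotient.mk I) J < Ideal.map (Ideal.Quotient.mk I) M
      refine lt_of_le_of_ne (Ideal.map_mono hJM) ?_
      intro h
      apply hne
      have h' := congrArg (Ideal.comap (Ideal.Quotient.mk I)) h
      rwa [hcomapJ, hcomapM] at h'
  have hJmax : J.IsMaximal := hJM' ▸ hM
  haveI := hJmax
  letI : Field (MvPolynomial (Fin m) K ⧸ J) := Ideal.Quotient.field J
  have hint := MvPolynomial.comp_C_integral_of_surjective_of_isJacobsonRing
    (Ideal.Quotient.mk J) Ideal.Quotient.mk_surjective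
  let g : MvPolynomial (Fin m) K ⧸ J →+* ℂ :=
    Ideal.Quotient.lift J φ (fun a ha => RingHom.mem_ker.mp ha)
  intro i
  obtain ⟨p, pm, hp⟩ := hint (Ideal.Quotient.mk J (X i))
  have h2 : (g.comp ((Ideal.Quotient.mk J).comp C)).IsIntegralElem
      (g (Ideal.Quotient.mk J (X i))) :=
    ⟨p, pm, by rw [← Polynomial.hom_eval₂, hp, map_zero]⟩
  have hcomp : g.comp ((Ideal.Quotient.mk J).comp C) = algebraMap K ℂ := by
    ext k
    show g (Ideal.Quotient.mk J (C k)) = _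
    rw [Ideal.Quotient.lift_mk, hφ, aeval_C]
  have hgX : g (Ideal.Quotient.mk J (X i)) = b i := by
    rw [show g (Ideal.Quotient.mk J (X i)) = φ (X i) from Ideal.Quotient.lift_mk _ _ _, hφ,
      aeval_X]
  rw [hcomp, hgX] at h2
  have h3 : IsIntegral K (b i) := h2
  have h4 : IsIntegral ℚ (b i) := by
    haveI : Algebra.IsIntegral ℚ K := Algebra.IsIntegral.of_finite ℚ K
    exact isIntegral_trans _ h3
  exact h4.isAlgebraic

section Machinery

variable {K : IntermediateField ℚ ℂ} {m : ℕ}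

/-- Substitution of the `x,y` variables. -/
def kcomp (F R S : MvPolynomial (Fin m ⊕ Fin 2) K) : MvPolynomial (Fin m ⊕ Fin 2) K :=
  aeval (Sum.elim (fun i => X (Sum.inl i)) ![R, S]) F

/-- Iterates at the level of `K[t][x,y]`. -/
def kIter (P Q : MvPolynomial (Fin m ⊕ Fin 2) K) :
    ℕ → MvPolynomial (Fin m ⊕ Fin 2) K × MvPolynomial (Fin m ⊕ Fin 2) K
  | 0 => (X (Sum.inr 0), X (Sum.inr 1))
  | n + 1 => (kcomp P (kIter P Q n).1 (kIter P Q n).2, kcomp Q (kIter P Q n).1 (kIter P Q n).2)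

lemma eval_specpoly (b : Fin m → ℂ) (w : Fin 2 → ℂ) (F : MvPolynomial (Fin m ⊕ Fin 2) K) :
    eval w (specpoly K m b F) = aeval (Sum.elim b w) F := by
  have h : (eval w).comp
      ((aeval (Sum.elim (fun i => (C (b i) : Poly2)) X) :
          MvPolynomial (Fin m ⊕ Fin 2) ℂ →ₐ[ℂ] Poly2).toRingHom.comp
        (MvPolynomial.map (algebraMap K ℂ)))
      = (aeval (Sum.elim b w) : MvPolynomial (Fin m ⊕ Fin 2) K →ₐ[K] ℂ).toRingHom := by
    apply MvPolynomial.ringHom_ext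
    · intro r; simp
    · intro i; cases i <;> simp
  exact DFunLike.congr_fun h F

lemma aeval_kcomp (b : Fin m → ℂ) (w : Fin 2 → ℂ) (F R S : MvPolynomial (Fin m ⊕ Fin 2) K) :
    aeval (Sum.elim b w) (kcomp F R S)
      = aeval (Sum.elim b ![aeval (Sum.elim b w) R, aeval (Sum.elim b w) S]) F := by
  rw [kcomp, MvPolynomial.comp_aeval_apply]
  have h : (fun i => (aeval (Sum.elim b w)) (Sum.elim (fun i => X (Sum.inl i)) ![R, S] i))
      = Sum.elim b ![aeval (Sum.elim b w) R, aeval (Sum.elim b w) S] := by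
    funext i
    cases i with
    | inl i => simp
    | inr j => fin_cases j <;> simp
  rw [h]

lemma famMap_iterate {I : Ideal (MvPolynomial (Fin m) K)} (f : RegFamily K m I)
    (b : Fin m → ℂ) (n : ℕ) (z : ℂ × ℂ) :
    (famMap f b)^[n] z = (aeval (Sum.elim b ![z.1, z.2]) (kIter f.P f.Q n).1,
      aeval (Sum.elim b ![z.1, z.2]) (kIter f.P f.Q n).2) := by
  induction n with
  | zero =>
    simp only [Function.iterate_zero, id_eq, kIter, aeval_X]
    ext <;> simp
  | succ n ih =>
    rw [Function.iterate_succ_apply', ih]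
    show evalPair _ _ _ = _
    rw [evalPair]
    simp only [kIter]
    rw [eval_specpoly, eval_specpoly, aeval_kcomp, aeval_kcomp]

/-- Regrouping a polynomial in `K[t ⊕ xy]` as a polynomial in `xy` with coefficients in `K[t]`. -/
def toCoeff (D : MvPolynomial (Fin m ⊕ Fin 2) K) :
    MvPolynomial (Fin 2) (MvPolynomial (Fin m) K) :=
  sumAlgEquiv K (Fin 2) (Fin m) (rename Sum.swap D)

lemma aeval_eq_eval_toCoeff (b : Fin m → ℂ) (w : Fin 2 → ℂ)
    (D : MvPolynomial (Fin m ⊕ Fin 2) K) :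
    aeval (Sum.elim b w) D
      = eval w (MvPolynomial.map
          ((aeval b : MvPolynomial (Fin m) K →ₐ[K] ℂ) : MvPolynomial (Fin m) K →+* ℂ)
          (toCoeff D)) := by
  have h : ((eval w).comp
      (MvPolynomial.map
          ((aeval b : MvPolynomial (Fin m) K →ₐ[K] ℂ) : MvPolynomial (Fin m) K →+* ℂ))).comp
        (((sumAlgEquiv K (Fin 2) (Fin m)).toAlgHom.toRingHom).comp
          (rename (Sum.swap : Fin m ⊕ Fin 2 → Fin 2 ⊕ Fin m)).toRingHom)
      = (aeval (Sum.elim b w) : MvPolynomial (Fin m ⊕ Fin 2) K →ₐ[K] ℂ).toRingHom := by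
    have hs : ∀ p : MvPolynomial (Fin 2 ⊕ Fin m) K,
        (sumAlgEquiv K (Fin 2) (Fin m)) p = sumToIter K (Fin 2) (Fin m) p := fun p => by
      induction p using MvPolynomial.induction_on with
      | C a => rw [sumAlgEquiv_C_inl, sumToIter_C]
      | add p q hp hq => rw [map_add, map_add, hp, hq]
      | mul_X p n hp =>
        cases n <;> simp [hp, sumAlgEquiv_X_inl, sumAlgEquiv_X_inr, sumToIter_Xl, sumToIter_Xr]
    apply MvPolynomial.ringHom_ext
    · intro r
      simp [hs, sumToIter_C]
    · intro i
      cases i with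
      | inl i => simp [hs, sumToIter_Xr]
      | inr j => simp [hs, sumToIter_Xl]
  exact (DFunLike.congr_fun h D).symm

end Machinery

/-- For two dynamically independent families, the set of parameters at which the two
specializations share a common iterate is countable. -/
theorem common_iterate_parameters_countable (K : IntermediateField ℚ ℂ)
    [FiniteDimensional ℚ K] (m : ℕ) (I : Ideal (MvPolynomial (Fin m) K))
    (hI : I.IsPrime) (hdim : ringKrullDim (MvPolynomial (Fin m) K ⧸ I) = 1)
    (f g : RegFamily K m I) (hind : DynIndependent f g) :
    {b | b ∈ Vcx K m I ∧
      ∃ n k : ℕ, 1 ≤ n ∧ 1 ≤ k ∧ (famMap f b)^[n] = (famMap g b)^[k]}.Countable := by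
  classical
  have hcnt : {b : Fin m → ℂ | ∀ i, IsAlgebraic ℚ (b i)}.Countable :=
    Set.countable_pi (fun _ : Fin m => Algebraic.countable ℚ ℂ)
  refine Set.Countable.mono ?_ hcnt
  rintro b ⟨hbV, n, k, hn, hk, hiter⟩
  obtain ⟨b₀, hb₀V, hb₀⟩ : ∃ b₀ ∈ Vcx K m I, (famMap f b₀)^[n] ≠ (famMap g b₀)^[k] := by
    by_contra hcon
    push_neg at hcon
    exact hind ⟨n, k, hn, hk, hcon⟩
  set D1 := (kIter f.P f.Q n).1 - (kIter g.P g.Q k).1 with hD1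
  set D2 := (kIter f.P f.Q n).2 - (kIter g.P g.Q k).2 with hD2
  have hzero : ∀ w : Fin 2 → ℂ, aeval (Sum.elim b w) D1 = 0 ∧ aeval (Sum.elim b w) D2 = 0 := by
    intro w
    have hz := congrFun hiter (w 0, w 1)
    rw [famMap_iterate, famMap_iterate] at hz
    have hw : ![((w 0 : ℂ), (w 1 : ℂ)).1, ((w 0 : ℂ), (w 1 : ℂ)).2] = w := by
      funext i; fin_cases i <;> rfl
    rw [hw] at hz
    constructor
    · rw [hD1, map_sub, sub_eq_zero]
      exact congrArg Prod.fst hz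
    · rw [hD2, map_sub, sub_eq_zero]
      exact congrArg Prod.snd hz
  have hb₀' : ∃ w : Fin 2 → ℂ, aeval (Sum.elim b₀ w) D1 ≠ 0 ∨ aeval (Sum.elim b₀ w) D2 ≠ 0 := by
    by_contra hcon
    push_neg at hcon
    apply hb₀
    funext z
    rw [famMap_iterate, famMap_iterate]
    have h1 := (hcon ![z.1, z.2]).1
    have h2 := (hcon ![z.1, z.2]).2
    rw [hD1, map_sub, sub_eq_zero] at h1
    rw [hD2, map_sub, sub_eq_zero] at h2
    rw [h1, h2]
  obtain ⟨w₀, hw₀⟩ := hb₀'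
  obtain ⟨D, hDb₀, hDb⟩ : ∃ D, aeval (Sum.elim b₀ w₀) D ≠ 0 ∧
      ∀ w, aeval (Sum.elim b w) D = 0 := by
    cases hw₀ with
    | inl h => exact ⟨D1, h, fun w => (hzero w).1⟩
    | inr h => exact ⟨D2, h, fun w => (hzero w).2⟩
  have hmapzero : MvPolynomial.map
      ((aeval b : MvPolynomial (Fin m) K →ₐ[K] ℂ) : MvPolynomial (Fin m) K →+* ℂ)
      (toCoeff D) = 0 := by
    apply MvPolynomial.funext
    intro w
    rw [← aeval_eq_eval_toCoeff, hDb w, map_zero]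
  have hmapne : MvPolynomial.map
      ((aeval b₀ : MvPolynomial (Fin m) K →ₐ[K] ℂ) : MvPolynomial (Fin m) K →+* ℂ)
      (toCoeff D) ≠ 0 := by
    intro h
    apply hDb₀
    rw [aeval_eq_eval_toCoeff b₀ w₀ D, h, map_zero]
  obtain ⟨s, hs⟩ : ∃ s, aeval b₀ (coeff s (toCoeff D)) ≠ 0 := by
    by_contra hcon
    push_neg at hcon
    apply hmapne
    ext s
    rw [coeff_map]
    simpa using hcon s
  have heI : coeff s (toCoeff D) ∉ I := fun hmem => hs (by
    rw [aeval_eq_eval_map]; exact hb₀V _ hmem)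
  have heb : aeval b (coeff s (toCoeff D)) = 0 := by
    have h := congrArg (coeff s) hmapzero
    rw [coeff_map] at h
    simpa using h
  intro i
  exact algebraic_of_extra_zero hI hdim b hbV _ heI heb i
end
end

section
/- Let f = (f_b) and g = (g_b) be two families of regular plane polynomial automorphisms parametrized by the same curve V. Then for any two transcendental parameters b, b' ∈ V(ℂ) ∖ V(K̄), there is a bijection between the sets Per(f_b) ∩ Per(g_b) and Per(f_{b'}) ∩ Per(g_{b'}); in particular these two sets have the same cardinality. -/
open MvPolynomial Filter

noncomputable section

/-! ### Auxiliary machinery for the proof -/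

set_option maxHeartbeats 1000000
set_option synthInstance.maxHeartbeats 400000

open Cardinal in
/-- Any two algebra structures of a countable field on an uncountable algebraically closed
field are conjugate by a ring automorphism. -/
theorem myExistsEquiv (R K' L : Type) [Field R] [Field K'] [Field L]
    [IsAlgClosed K'] [IsAlgClosed L] [Algebra R K'] [Algebra R L]
    (hR : #R ≤ ℵ₀) (hK : ℵ₀ < #K') (hKL : #K' = #L) :
    ∃ σ : K' ≃+* L, ∀ r : R, σ (algebraMap R K' r) = algebraMap R L r := by
  obtain ⟨s, hs⟩ := haveI := (faithfulSMul_iff_algebraMap_injective R K').mpr (algebraMap R K').injective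
    exists_isTranscendenceBasis R K'
  obtain ⟨t, ht⟩ := haveI := (faithfulSMul_iff_algebraMap_injective R L).mpr (algebraMap R L).injective
    exists_isTranscendenceBasis R L
  have hst : #s = #t := by
    rw [← IsAlgClosed.cardinal_eq_cardinal_transcendence_basis_of_aleph0_lt' _ hs hR hK,
      ← IsAlgClosed.cardinal_eq_cardinal_transcendence_basis_of_aleph0_lt' _ ht hR
        (hKL ▸ hK), hKL]
  obtain ⟨e⟩ := Cardinal.eq.1 hst
  let e₀ : Algebra.adjoin R (Set.range ((↑) : s → K')) ≃ₐ[R]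
      Algebra.adjoin R (Set.range ((↑) : t → L)) :=
    hs.1.aevalEquiv.symm.trans ((MvPolynomial.renameEquiv R e).trans ht.1.aevalEquiv)
  letI := IsAlgClosed.isAlgClosure_of_transcendence_basis _ hs
  letI := IsAlgClosed.isAlgClosure_of_transcendence_basis _ ht
  refine ⟨IsAlgClosure.equivOfEquiv K' L e₀.toRingEquiv, fun r => ?_⟩
  rw [IsScalarTower.algebraMap_apply R (Algebra.adjoin R (Set.range ((↑) : s → K'))) K' r,
    IsAlgClosure.equivOfEquiv_algebraMap]
  show algebraMap _ L (e₀ (algebraMap R _ r)) = _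
  rw [AlgEquiv.commutes, ← IsScalarTower.algebraMap_apply]

open Cardinal in
/-- Two embeddings of a countable domain into `ℂ` are conjugate by an automorphism of `ℂ`. -/
theorem exists_conj_aut (A : Type) [CommRing A] [IsDomain A] [Countable A]
    (φ φ' : A →+* ℂ) (hinj : Function.Injective φ) (hinj' : Function.Injective φ') :
    ∃ σ : ℂ ≃+* ℂ, ∀ a : A, σ (φ a) = φ' a := by
  let β : FractionRing A →+* ℂ := IsFractionRing.lift hinj
  let β' : FractionRing A →+* ℂ := IsFractionRing.lift hinj'
  haveI : Countable (FractionRing A) := by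
    have hsurj : Function.Surjective (fun p : A × A =>
        algebraMap A (FractionRing A) p.1 / algebraMap A (FractionRing A) p.2) := by
      intro z
      obtain ⟨x, y, -, h⟩ := IsFractionRing.div_surjective (A := A) z
      exact ⟨(x, y), h⟩
    exact hsurj.countable
  obtain ⟨σ, hσ⟩ := @myExistsEquiv (FractionRing A) ℂ ℂ _ _ _ _ _ β.toAlgebra β'.toAlgebra
    Cardinal.mk_le_aleph0 (by rw [mk_complex]; exact Cardinal.aleph0_lt_continuum) rfl
  have hσβ : ∀ r : FractionRing A, σ (β r) = β' r := hσ
  refine ⟨σ, fun a => ?_⟩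
  have e1 : β (algebraMap A (FractionRing A) a) = φ a := IsFractionRing.lift_algebraMap _ _
  have e1' : β' (algebraMap A (FractionRing A) a) = φ' a := IsFractionRing.lift_algebraMap _ _
  rw [← e1, hσβ, e1']

/-- The evaluation ring homomorphism at a parameter `b`. -/
def psi (K : IntermediateField ℚ ℂ) (m : ℕ) (b : Fin m → ℂ) :
    MvPolynomial (Fin m) K →+* ℂ :=
  (MvPolynomial.eval b).comp (MvPolynomial.map (algebraMap K ℂ))

/-- At a transcendental point of a dimension-one irreducible variety, the kernel of the
evaluation map is exactly the defining prime ideal. -/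
theorem ker_psi_eq (K : IntermediateField ℚ ℂ) (m : ℕ)
    (I : Ideal (MvPolynomial (Fin m) K)) (hI : I.IsPrime)
    (hdim : ringKrullDim (MvPolynomial (Fin m) K ⧸ I) = 1)
    (b : Fin m → ℂ) (hb : ∀ p ∈ I, eval b (MvPolynomial.map (algebraMap K ℂ) p) = 0)
    (hbt : ∃ i, ¬ IsAlgebraic K (b i)) :
    RingHom.ker (psi K m b) = I := by
  set J := RingHom.ker (psi K m b) with hJ
  haveI hJp : J.IsPrime := RingHom.ker_isPrime _
  have hIJ : I ≤ J := fun p hp => hb p hp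
  rcases eq_or_lt_of_le hIJ with h | hlt
  · exact h.symm
  exfalso
  by_cases hmax : J.IsMaximal
  · obtain ⟨i, hi⟩ := hbt
    apply hi
    letI : Field (MvPolynomial (Fin m) K ⧸ J) := Ideal.Quotient.field J
    have hint := MvPolynomial.comp_C_integral_of_surjective_of_isJacobsonRing
      (Ideal.Quotient.mk J) Ideal.Quotient.mk_surjective
    letI : Algebra K (MvPolynomial (Fin m) K ⧸ J) :=
      ((Ideal.Quotient.mk J).comp MvPolynomial.C).toAlgebra
    have hXint : IsIntegral K (Ideal.Quotient.mk J (X i)) := hint _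
    let φ : (MvPolynomial (Fin m) K ⧸ J) →+* ℂ :=
      Ideal.Quotient.lift J (psi K m b) (fun a ha => ha)
    have hcomm : ∀ k : K, φ (algebraMap K (MvPolynomial (Fin m) K ⧸ J) k)
        = algebraMap K ℂ k := by
      intro k
      show φ (Ideal.Quotient.mk J (MvPolynomial.C k)) = algebraMap K ℂ k
      simp [φ, psi]
    have hφcomp : φ.comp (algebraMap K (MvPolynomial (Fin m) K ⧸ J)) = algebraMap K ℂ :=
      RingHom.ext hcomm
    have hbi : φ (Ideal.Quotient.mk J (X i)) = b i := by
      show φ (Ideal.Quotient.mk J (X i)) = b i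
      simp [φ, psi]
    obtain ⟨p, hmonic, hp⟩ := hXint
    refine ⟨p, hmonic.ne_zero, ?_⟩
    rw [Polynomial.aeval_def, ← hbi, ← hφcomp, ← Polynomial.hom_eval₂, hp, map_zero]
  · obtain ⟨M, hM, hJM⟩ := Ideal.exists_le_maximal J hJp.ne_top
    have hJM' : J < M := lt_of_le_of_ne hJM (fun h => hmax (h ▸ hM))
    set mk := Ideal.Quotient.mk I
    have hsurj : Function.Surjective mk := Ideal.Quotient.mk_surjective
    have hker : RingHom.ker mk = I := Ideal.mk_ker
    haveI : (Ideal.map mk J).IsPrime :=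
      Ideal.map_isPrime_of_surjective hsurj ((le_of_eq hker).trans hIJ)
    haveI : (Ideal.map mk M).IsPrime :=
      letI := hM.isPrime
      Ideal.map_isPrime_of_surjective hsurj ((le_of_eq hker).trans (le_trans hIJ hJM))
    have hcomap : ∀ N : Ideal (MvPolynomial (Fin m) K), I ≤ N →
        Ideal.comap mk (Ideal.map mk N) = N := by
      intro N hN
      rw [Ideal.comap_map_of_surjective mk hsurj, ← RingHom.ker_eq_comap_bot, hker,
        sup_eq_left.2 hN]
    haveI : IsDomain (MvPolynomial (Fin m) K ⧸ I) := Ideal.Quotient.isDomain I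
    have h01 : (⊥ : Ideal (MvPolynomial (Fin m) K ⧸ I)) < Ideal.map mk J := by
      obtain ⟨x, hxJ, hxI⟩ := SetLike.exists_of_lt hlt
      refine lt_of_le_of_ne bot_le (fun h => hxI ?_)
      have : mk x ∈ Ideal.map mk J := Ideal.mem_map_of_mem mk hxJ
      rw [← h] at this
      have : x ∈ RingHom.ker mk := by simpa using this
      rwa [hker] at this
    have h12 : Ideal.map mk J < Ideal.map mk M := by
      refine lt_of_le_of_ne (Ideal.map_mono hJM) (fun h => hJM'.ne ?_)
      have := congrArg (Ideal.comap mk) h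
      rwa [hcomap J hIJ, hcomap M (le_trans hIJ hJM)] at this
    let p : LTSeries (PrimeSpectrum (MvPolynomial (Fin m) K ⧸ I)) :=
      { length := 2
        toFun := ![⟨⊥, Ideal.bot_prime⟩, ⟨Ideal.map mk J, ‹_›⟩, ⟨Ideal.map mk M, ‹_›⟩]
        step := by
          intro i
          fin_cases i
          · exact h01
          · exact h12 }
    have := Order.LTSeries.length_le_krullDim p
    rw [show ringKrullDim (MvPolynomial (Fin m) K ⧸ I) =
      Order.krullDim (PrimeSpectrum (MvPolynomial (Fin m) K ⧸ I)) from rfl] at hdim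
    rw [hdim] at this
    norm_num [p] at this

section Transport

variable {K : IntermediateField ℚ ℂ} {m : ℕ} (σ : ℂ ≃+* ℂ) {b b' : Fin m → ℂ}

theorem spec_map (hσK : ∀ k : K, σ (algebraMap K ℂ k) = algebraMap K ℂ k)
    (hσb : ∀ i, σ (b i) = b' i) (F : MvPolynomial (Fin m ⊕ Fin 2) K) :
    specpoly K m b' F = MvPolynomial.map (σ : ℂ →+* ℂ) (specpoly K m b F) := by
  have h : (MvPolynomial.map (σ : ℂ →+* ℂ)).comp
      ((aeval (Sum.elim (fun i => (C (b i) : Poly2)) X)).toRingHom.comp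
        (MvPolynomial.map (algebraMap K ℂ)))
      = (aeval (Sum.elim (fun i => (C (b' i) : Poly2)) X)).toRingHom.comp
        (MvPolynomial.map (algebraMap K ℂ)) := by
    apply MvPolynomial.ringHom_ext
    · intro k
      simpa [MvPolynomial.algebraMap_eq] using hσK k
    · intro i
      cases i with
      | inl i => simp [hσb i]
      | inr j => simp
  exact (RingHom.congr_fun h F).symm

theorem eval_commute (R : Poly2) (x y : ℂ) :
    eval ![σ x, σ y] (MvPolynomial.map (σ : ℂ →+* ℂ) R) = σ (eval ![x, y] R) := by
  have h1 : σ (eval ![x, y] R) = eval₂ (σ : ℂ →+* ℂ) (⇑σ ∘ ![x, y]) R := by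
    have h0 := MvPolynomial.eval₂_comp_left (σ : ℂ →+* ℂ) (RingHom.id ℂ) ![x, y] R
    rw [RingHom.comp_id] at h0
    rw [← MvPolynomial.eval₂_id]
    exact h0
  have h2 : ⇑σ ∘ ![x, y] = ![σ x, σ y] := by
    funext i; fin_cases i <;> simp
  rw [h1, ← h2, MvPolynomial.eval_map]

/-- The coordinatewise action of `σ` on `ℂ²`. -/
def sMap : ℂ × ℂ → ℂ × ℂ := fun z => (σ z.1, σ z.2)

theorem evalPair_commute (P Q : Poly2) (z : ℂ × ℂ) :
    evalPair (MvPolynomial.map (σ : ℂ →+* ℂ) P) (MvPolynomial.map (σ : ℂ →+* ℂ) Q)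
      (sMap σ z) = sMap σ (evalPair P Q z) := by
  simp only [evalPair, sMap]
  exact Prod.ext (eval_commute σ P z.1 z.2) (eval_commute σ Q z.1 z.2)

theorem iter_commute (P Q : Poly2) (n : ℕ) (z : ℂ × ℂ) :
    (evalPair (MvPolynomial.map (σ : ℂ →+* ℂ) P) (MvPolynomial.map (σ : ℂ →+* ℂ) Q))^[n]
      (sMap σ z) = sMap σ ((evalPair P Q)^[n] z) := by
  induction n with
  | zero => rfl
  | succ n ih => rw [Function.iterate_succ_apply', Function.iterate_succ_apply', ih,
      evalPair_commute]

theorem sMap_injective : Function.Injective (sMap σ) := by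
  intro z w h
  exact Prod.ext (σ.injective (congrArg Prod.fst h)) (σ.injective (congrArg Prod.snd h))

theorem perSet_iff (P Q : Poly2) (z : ℂ × ℂ) :
    z ∈ PerSet P Q ↔ sMap σ z ∈ PerSet (MvPolynomial.map (σ : ℂ →+* ℂ) P)
      (MvPolynomial.map (σ : ℂ →+* ℂ) Q) := by
  constructor
  · rintro ⟨n, hn, hz⟩
    exact ⟨n, hn, by rw [iter_commute, hz]⟩
  · rintro ⟨n, hn, hz⟩
    refine ⟨n, hn, sMap_injective σ ?_⟩
    rw [← iter_commute, hz]

end Transport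


/-- At any two transcendental parameters, the sets of common periodic points of the two
families are in bijection. -/
theorem transcendental_fibers_equinumerous (K : IntermediateField ℚ ℂ)
    [FiniteDimensional ℚ K] (m : ℕ) (I : Ideal (MvPolynomial (Fin m) K))
    (hI : I.IsPrime) (hdim : ringKrullDim (MvPolynomial (Fin m) K ⧸ I) = 1)
    (f g : RegFamily K m I) (b b' : Fin m → ℂ)
    (hb : b ∈ Vcx K m I) (hbt : b ∉ VKbar K m I)
    (hb' : b' ∈ Vcx K m I) (hbt' : b' ∉ VKbar K m I) :
    Nonempty ((famPer f b ∩ famPer g b : Set (ℂ × ℂ)) ≃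
      (famPer f b' ∩ famPer g b' : Set (ℂ × ℂ))) := by
  classical
  haveI := hI
  -- transcendence witnesses
  have hbtb : ∃ i, ¬ IsAlgebraic K (b i) := by
    by_contra h
    push_neg at h
    exact hbt ⟨hb, fun i => h i⟩
  have hbtb' : ∃ i, ¬ IsAlgebraic K (b' i) := by
    by_contra h
    push_neg at h
    exact hbt' ⟨hb', fun i => h i⟩
  have hkb : RingHom.ker (psi K m b) = I := ker_psi_eq K m I hI hdim b hb hbtb
  have hkb' : RingHom.ker (psi K m b') = I := ker_psi_eq K m I hI hdim b' hb' hbtb'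
  -- embeddings of the coordinate ring
  haveI : IsDomain (MvPolynomial (Fin m) K ⧸ I) := Ideal.Quotient.isDomain I
  let φb : (MvPolynomial (Fin m) K ⧸ I) →+* ℂ :=
    Ideal.Quotient.lift I (psi K m b) (fun a ha => hb a ha)
  let φb' : (MvPolynomial (Fin m) K ⧸ I) →+* ℂ :=
    Ideal.Quotient.lift I (psi K m b') (fun a ha => hb' a ha)
  have hinjb : Function.Injective φb := by
    refine (injective_iff_map_eq_zero _).2 ?_
    intro x hx
    obtain ⟨a, rfl⟩ := Ideal.Quotient.mk_surjective x
    have ha : a ∈ RingHom.ker (psi K m b) := hx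
    rw [hkb] at ha
    exact Ideal.Quotient.eq_zero_iff_mem.2 ha
  have hinjb' : Function.Injective φb' := by
    refine (injective_iff_map_eq_zero _).2 ?_
    intro x hx
    obtain ⟨a, rfl⟩ := Ideal.Quotient.mk_surjective x
    have ha : a ∈ RingHom.ker (psi K m b') := hx
    rw [hkb'] at ha
    exact Ideal.Quotient.eq_zero_iff_mem.2 ha
  haveI : Countable K :=
    (Module.finBasis ℚ K).equivFun.toEquiv.symm.surjective.countable
  haveI : Countable (MvPolynomial (Fin m) K) :=
    Function.Surjective.countable (f := AddMonoidAlgebra.ofCoeff (R := K) (M := Fin m →₀ ℕ))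
      (fun p => ⟨AddMonoidAlgebra.coeff p, rfl⟩)
  haveI : Countable (MvPolynomial (Fin m) K ⧸ I) := Quotient.countable
  obtain ⟨σ, hσ⟩ := exists_conj_aut (MvPolynomial (Fin m) K ⧸ I) φb φb' hinjb hinjb'
  have hσK : ∀ k : K, σ (algebraMap K ℂ k) = algebraMap K ℂ k := by
    intro k
    have e1 : φb (Ideal.Quotient.mk I (MvPolynomial.C k)) = algebraMap K ℂ k := by
      show psi K m b (MvPolynomial.C k) = _
      simp [psi]
    have e1' : φb' (Ideal.Quotient.mk I (MvPolynomial.C k)) = algebraMap K ℂ k := by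
      show psi K m b' (MvPolynomial.C k) = _
      simp [psi]
    have h2 := hσ (Ideal.Quotient.mk I (MvPolynomial.C k))
    rw [e1, e1'] at h2
    exact h2
  have hσb : ∀ i, σ (b i) = b' i := by
    intro i
    have e1 : φb (Ideal.Quotient.mk I (X i)) = b i := by
      show psi K m b (X i) = _
      simp [psi]
    have e1' : φb' (Ideal.Quotient.mk I (X i)) = b' i := by
      show psi K m b' (X i) = _
      simp [psi]
    have h2 := hσ (Ideal.Quotient.mk I (X i))
    rw [e1, e1'] at h2
    exact h2
  -- transport of periodic points
  have hper : ∀ (F G : MvPolynomial (Fin m ⊕ Fin 2) K) (z : ℂ × ℂ),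
      z ∈ PerSet (specpoly K m b F) (specpoly K m b G) ↔
        sMap σ z ∈ PerSet (specpoly K m b' F) (specpoly K m b' G) := by
    intro F G z
    rw [spec_map σ hσK hσb F, spec_map σ hσK hσb G]
    exact perSet_iff σ _ _ z
  refine ⟨Equiv.subtypeEquiv (Equiv.prodCongr σ.toEquiv σ.toEquiv) (fun z => ?_)⟩
  show z ∈ famPer f b ∩ famPer g b ↔ sMap σ z ∈ famPer f b' ∩ famPer g b'
  simp only [Set.mem_inter_iff]
  exact and_congr (hper f.P f.Q z) (hper g.P g.Q z)
end
end

section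
/- Let f be a regular polynomial automorphism of ℂ² of degree d. Then deg(fⁿ) = dⁿ for every integer n ≥ 1; in particular the first dynamical degree λ(f) = lim_{n→∞} (deg fⁿ)^{1/n} equals d > 1. -/
open MvPolynomial Filter

noncomputable section

namespace RegAux


lemma deg2 (m : Fin 2 →₀ ℕ) : m.degree = m 0 + m 1 := by
  rw [Finsupp.degree_eq_sum, Fin.sum_univ_two]

lemma sum2 (m : Fin 2 →₀ ℕ) : (m.sum fun _ e => e) = m 0 + m 1 := by
  rw [Finsupp.sum_fintype _ _ (fun _ => rfl), Fin.sum_univ_two]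

lemma prod2 {M : Type*} [CommMonoid M] (m : Fin 2 →₀ ℕ) (f : Fin 2 → M) :
    (m.prod fun i k => f i ^ k) = f 0 ^ m 0 * f 1 ^ m 1 := by
  rw [Finsupp.prod_fintype _ _ (fun i => pow_zero (f i)), Fin.prod_univ_two]

lemma tdle {p : Poly2} {n : ℕ} :
    p.totalDegree ≤ n ↔ ∀ m ∈ p.support, m 0 + m 1 ≤ n := by
  rw [totalDegree, Finset.sup_le_iff]
  refine forall₂_congr fun m hm => ?_
  rw [sum2]

lemma pcomp_monomial (m : Fin 2 →₀ ℕ) (c : ℂ) (R S : Poly2) :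
    pcomp (monomial m c) R S = C c * R ^ m 0 * S ^ m 1 := by
  rw [pcomp, aeval_monomial, prod2]
  simp [algebraMap_eq, mul_assoc]

lemma supp_hom {p : Poly2} {n : ℕ} (h : p.IsHomogeneous n) {m : Fin 2 →₀ ℕ}
    (hm : m ∈ p.support) : m 0 + m 1 = n := by
  have := h (mem_support_iff.mp hm)
  rwa [show (Finsupp.weight 1 : (Fin 2 →₀ ℕ) →+ ℕ) = Finsupp.degree from
    Finsupp.degree_eq_weight_one.symm, deg2] at this

lemma hc_of_isHomogeneous {p : Poly2} {n : ℕ} (h : p.IsHomogeneous n) :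
    homogeneousComponent n p = p :=
  (homogeneousComponent_of_mem ((mem_homogeneousSubmodule n p).2 h)).trans (if_pos rfl)

lemma hc_totalDegree_ne_zero {p : Poly2} (hp : p ≠ 0) :
    homogeneousComponent p.totalDegree p ≠ 0 := by
  obtain ⟨m, hm, hdeg⟩ :=
    Finset.exists_mem_eq_sup _ (support_nonempty.2 hp) (fun s : Fin 2 →₀ ℕ => s.sum fun _ e => e)
  intro h0
  have hcm := coeff_homogeneousComponent (σ := Fin 2) (R := ℂ) p.totalDegree p m
  rw [h0] at hcm
  have hmd : m.degree = p.totalDegree := by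
    rw [deg2, ← sum2]; exact hdeg.symm
  rw [if_pos hmd] at hcm
  exact mem_support_iff.mp hm hcm.symm

lemma sub_hc_deg {p : Poly2} {n : ℕ} (h : p.totalDegree ≤ n) :
    (p - homogeneousComponent n p).totalDegree ≤ n - 1 := by
  rw [tdle]
  intro m hm
  rw [mem_support_iff, coeff_sub, coeff_homogeneousComponent] at hm
  by_cases hd : m.degree = n
  · simp [hd] at hm
  · rw [if_neg hd, sub_zero] at hm
    have h1 : m 0 + m 1 ≤ n := tdle.mp h m (mem_support_iff.mpr hm)
    rw [deg2] at hd
    omega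

lemma totalDegree_pcomp_le (F R S : Poly2) {d e : ℕ} (hF : F.totalDegree ≤ d)
    (hR : R.totalDegree ≤ e) (hS : S.totalDegree ≤ e) :
    (pcomp F R S).totalDegree ≤ d * e := by
  conv_lhs => rw [F.as_sum]
  rw [pcomp, map_sum]
  refine (totalDegree_finset_sum _ _).trans (Finset.sup_le ?_)
  intro m hm
  rw [show (aeval ![R, S]) (monomial m (coeff m F)) = C (coeff m F) * R ^ m 0 * S ^ m 1
    from pcomp_monomial m _ R S]
  calc (C (coeff m F) * R ^ m 0 * S ^ m 1).totalDegree
      ≤ (C (coeff m F) * R ^ m 0).totalDegree + (S ^ m 1).totalDegree := totalDegree_mul _ _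
    _ ≤ ((C (coeff m F)).totalDegree + (R ^ m 0).totalDegree) + (S ^ m 1).totalDegree := by
        exact Nat.add_le_add_right (totalDegree_mul _ _) _
    _ ≤ (0 + m 0 * e) + m 1 * e := by
        refine Nat.add_le_add (Nat.add_le_add (le_of_eq (totalDegree_C _)) ?_) ?_
        · exact (totalDegree_pow _ _).trans (Nat.mul_le_mul_left _ hR)
        · exact (totalDegree_pow _ _).trans (Nat.mul_le_mul_left _ hS)
    _ = (m 0 + m 1) * e := by ring
    _ ≤ d * e := Nat.mul_le_mul_right _ (le_trans (by rw [← sum2]; exact le_totalDegree hm) hF)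

lemma isHomogeneous_pcomp {F R S : Poly2} {d e : ℕ} (hF : F.IsHomogeneous d)
    (hR : R.IsHomogeneous e) (hS : S.IsHomogeneous e) :
    (pcomp F R S).IsHomogeneous (d * e) := by
  rw [F.as_sum, pcomp, map_sum]
  refine IsHomogeneous.sum _ _ _ ?_
  intro m hm
  rw [show (aeval ![R, S]) (monomial m (coeff m F)) = C (coeff m F) * R ^ m 0 * S ^ m 1
    from pcomp_monomial m _ R S]
  have h1 : m 0 + m 1 = d := supp_hom hF hm
  have : ((C (coeff m F) : Poly2) * R ^ m 0 * S ^ m 1).IsHomogeneous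
      ((0 + e * m 0) + e * m 1) :=
    ((isHomogeneous_C _ _).mul (hR.pow _)).mul (hS.pow _)
  convert this using 1
  rw [← h1]; ring



lemma deg_pow_sub {R : Poly2} {e : ℕ} (he : 1 ≤ e) (hR : R.totalDegree ≤ e) {i : ℕ} (hi : 1 ≤ i) :
    (R ^ i - (homogeneousComponent e R) ^ i).totalDegree ≤ i * e - 1 := by
  set Re := homogeneousComponent e R with hRe
  have hRede : Re.totalDegree ≤ e := (homogeneousComponent_isHomogeneous e R).totalDegree_le
  rw [← geom_sum₂_mul R Re i]
  refine (totalDegree_mul _ _).trans ?_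
  have h1 : (∑ k ∈ Finset.range i, R ^ k * Re ^ (i - 1 - k)).totalDegree ≤ (i - 1) * e := by
    refine (totalDegree_finset_sum _ _).trans (Finset.sup_le ?_)
    intro k hk
    rw [Finset.mem_range] at hk
    refine (totalDegree_mul _ _).trans ?_
    calc (R ^ k).totalDegree + (Re ^ (i - 1 - k)).totalDegree
        ≤ k * e + (i - 1 - k) * e := Nat.add_le_add
          ((totalDegree_pow _ _).trans (Nat.mul_le_mul_left _ hR))
          ((totalDegree_pow _ _).trans (Nat.mul_le_mul_left _ hRede))
      _ = (k + (i - 1 - k)) * e := by ring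
      _ ≤ (i - 1) * e := Nat.mul_le_mul_right _ (by omega)
  have h2 : (R - Re).totalDegree ≤ e - 1 := sub_hc_deg hR
  calc _ ≤ (i - 1) * e + (e - 1) := Nat.add_le_add h1 h2
    _ ≤ i * e - 1 := by
        obtain ⟨i', rfl⟩ : ∃ i', i = i' + 1 := ⟨i - 1, by omega⟩
        simp only [Nat.add_sub_cancel]
        have h3 : (i' + 1) * e = i' * e + e := by ring
        rw [h3]
        generalize i' * e = A
        omega

lemma deg_mul_pow_sub {R S : Poly2} {e : ℕ} (he : 1 ≤ e)
    (hR : R.totalDegree ≤ e) (hS : S.totalDegree ≤ e) {i j d : ℕ}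
    (hij : i + j = d) (hd : 1 ≤ d) :
    (R ^ i * S ^ j - (homogeneousComponent e R) ^ i * (homogeneousComponent e S) ^ j).totalDegree
      ≤ d * e - 1 := by
  set Re := homogeneousComponent e R
  set Se := homogeneousComponent e S
  have hRede : Re.totalDegree ≤ e := (homogeneousComponent_isHomogeneous e R).totalDegree_le
  have hSede : Se.totalDegree ≤ e := (homogeneousComponent_isHomogeneous e S).totalDegree_le
  have split : R ^ i * S ^ j - Re ^ i * Se ^ j
      = (R ^ i - Re ^ i) * S ^ j + Re ^ i * (S ^ j - Se ^ j) := by ring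
  rw [split]
  refine (totalDegree_add _ _).trans (max_le ?_ ?_)
  · rcases Nat.eq_zero_or_pos i with hi | hi
    · subst hi; simp
    · refine (totalDegree_mul _ _).trans ?_
      have h1 := deg_pow_sub he hR hi
      have h2 : (S ^ j).totalDegree ≤ j * e :=
        (totalDegree_pow _ _).trans (Nat.mul_le_mul_left _ hS)
      calc _ ≤ (i * e - 1) + j * e := Nat.add_le_add h1 h2
        _ ≤ d * e - 1 := by
            have hie : 1 ≤ i * e := Nat.one_le_iff_ne_zero.mpr (by positivity)
            subst hij
            have : (i + j) * e = i * e + j * e := by ring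
            rw [this]
            omega
  · rcases Nat.eq_zero_or_pos j with hj | hj
    · subst hj; simp
    · refine (totalDegree_mul _ _).trans ?_
      have h1 := deg_pow_sub he hS hj
      have h2 : (Re ^ i).totalDegree ≤ i * e :=
        (totalDegree_pow _ _).trans (Nat.mul_le_mul_left _ hRede)
      calc _ ≤ i * e + (j * e - 1) := Nat.add_le_add h2 h1
        _ ≤ d * e - 1 := by
            have hje : 1 ≤ j * e := Nat.one_le_iff_ne_zero.mpr (by positivity)
            subst hij
            have : (i + j) * e = i * e + j * e := by ring
            rw [this]
            omega


lemma pcomp_sub_top_deg (F R S : Poly2) {d e : ℕ} (hd : 1 ≤ d) (he : 1 ≤ e)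
    (hF : F.totalDegree ≤ d) (hR : R.totalDegree ≤ e) (hS : S.totalDegree ≤ e) :
    (pcomp F R S - pcomp (homogeneousComponent d F) (homogeneousComponent e R)
      (homogeneousComponent e S)).totalDegree ≤ d * e - 1 := by
  set Fd := homogeneousComponent d F with hFd
  set Re := homogeneousComponent e R with hRe
  set Se := homogeneousComponent e S with hSe
  have e1 : pcomp F R S - pcomp Fd Re Se
      = pcomp (F - Fd) R S + (pcomp Fd R S - pcomp Fd Re Se) := by
    simp only [pcomp, map_sub]
    ring
  rw [e1]
  refine (totalDegree_add _ _).trans (max_le ?_ ?_)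
  · refine (totalDegree_pcomp_le _ _ _ (sub_hc_deg hF) hR hS).trans ?_
    obtain ⟨d', rfl⟩ : ∃ d', d = d' + 1 := ⟨d - 1, by omega⟩
    calc (d' + 1 - 1) * e = d' * e := by rw [Nat.add_sub_cancel]
      _ ≤ d' * e + (e - 1) := Nat.le_add_right _ _
      _ ≤ (d' + 1) * e - 1 := by
          rw [add_mul, one_mul]
          omega
  · have e2 : pcomp Fd R S - pcomp Fd Re Se
        = ∑ m ∈ Fd.support,
            C (coeff m Fd) * (R ^ m 0 * S ^ m 1 - Re ^ m 0 * Se ^ m 1) := by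
      conv_lhs => rw [Fd.as_sum]
      simp only [pcomp, map_sum]
      rw [← Finset.sum_sub_distrib]
      refine Finset.sum_congr rfl fun m _ => ?_
      rw [show (aeval ![R, S]) (monomial m (coeff m Fd)) = C (coeff m Fd) * R ^ m 0 * S ^ m 1
          from pcomp_monomial m _ R S,
        show (aeval ![Re, Se]) (monomial m (coeff m Fd)) = C (coeff m Fd) * Re ^ m 0 * Se ^ m 1
          from pcomp_monomial m _ Re Se]
      ring
    rw [e2]
    refine (totalDegree_finset_sum _ _).trans (Finset.sup_le ?_)
    intro m hm
    refine (totalDegree_mul _ _).trans ?_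
    have hmd : m 0 + m 1 = d := supp_hom (homogeneousComponent_isHomogeneous d F) hm
    have key := deg_mul_pow_sub (R := R) (S := S) he hR hS hmd hd
    rw [totalDegree_C, zero_add]
    exact key

lemma pcomp_top (F R S : Poly2) {d e : ℕ} (hd : 1 ≤ d) (he : 1 ≤ e)
    (hF : F.totalDegree ≤ d) (hR : R.totalDegree ≤ e) (hS : S.totalDegree ≤ e) :
    homogeneousComponent (d * e) (pcomp F R S)
      = pcomp (homogeneousComponent d F) (homogeneousComponent e R) (homogeneousComponent e S)
    ∧ (pcomp F R S).totalDegree ≤ d * e := by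
  set Fd := homogeneousComponent d F
  set Re := homogeneousComponent e R
  set Se := homogeneousComponent e S
  have hhom : (pcomp Fd Re Se).IsHomogeneous (d * e) :=
    isHomogeneous_pcomp (homogeneousComponent_isHomogeneous d F)
      (homogeneousComponent_isHomogeneous e R) (homogeneousComponent_isHomogeneous e S)
  have hdiff := pcomp_sub_top_deg F R S hd he hF hR hS
  have hde : 1 ≤ d * e := Nat.one_le_iff_ne_zero.mpr (by positivity)
  constructor
  · have h1 : homogeneousComponent (d * e) (pcomp F R S - pcomp Fd Re Se) = 0 :=
      homogeneousComponent_eq_zero _ _ (lt_of_le_of_lt hdiff (by omega))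
    have h2 : homogeneousComponent (d * e) (pcomp Fd Re Se) = pcomp Fd Re Se :=
      hc_of_isHomogeneous hhom
    have h3 : pcomp F R S = (pcomp F R S - pcomp Fd Re Se) + pcomp Fd Re Se := by ring
    rw [h3, map_add, h1, h2, zero_add]
  · have h3 : pcomp F R S = (pcomp F R S - pcomp Fd Re Se) + pcomp Fd Re Se := by ring
    rw [h3]
    exact (totalDegree_add _ _).trans
      (max_le (hdiff.trans (Nat.sub_le _ _)) hhom.totalDegree_le)


lemma vec_eta {M : Type*} (x : Fin 2 → M) : ![x 0, x 1] = x := by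
  funext i; fin_cases i <;> simp

lemma eval_pcomp (x : Fin 2 → ℂ) (F R S : Poly2) :
    eval x (pcomp F R S) = eval ![eval x R, eval x S] F := by
  induction F using MvPolynomial.induction_on with
  | C a => simp [pcomp]
  | add p q hp hq => simp only [pcomp, map_add] at *; rw [hp, hq]
  | mul_X p i hp =>
    simp only [pcomp, map_mul, aeval_X] at *
    rw [hp]
    fin_cases i <;> simp

lemma pcomp_homog_Cmul {G : Poly2} {k : ℕ} (hG : G.IsHomogeneous k) (a b : ℂ) (w : Poly2) :
    pcomp G (C a * w) (C b * w) = C (eval ![a, b] G) * w ^ k := by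
  conv_lhs => rw [G.as_sum]
  conv_rhs => rw [G.as_sum]
  simp only [pcomp, map_sum, Finset.sum_mul]
  refine Finset.sum_congr rfl fun m hm => ?_
  have hmd : m 0 + m 1 = k := supp_hom hG hm
  rw [show (aeval ![C a * w, C b * w]) (monomial m (coeff m G))
      = C (coeff m G) * (C a * w) ^ m 0 * (C b * w) ^ m 1 from pcomp_monomial m _ _ _,
    eval_monomial, prod2]
  simp only [Matrix.cons_val_zero, Matrix.cons_val_one, Matrix.head_cons]
  rw [mul_pow, mul_pow, ← hmd, pow_add]
  simp only [map_mul, map_pow]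
  ring

set_option maxHeartbeats 1000000 in
set_option synthInstance.maxHeartbeats 1000000 in
lemma homog_dep {F u v : Poly2} {e : ℕ} (hF : F.IsHomogeneous e) (hFne : F ≠ 0)
    (h0 : pcomp F u v = 0) : ∃ a b : ℂ, (a ≠ 0 ∨ b ≠ 0) ∧ C b * u = C a * v := by
  by_cases hv : v = 0
  · exact ⟨1, 0, Or.inl one_ne_zero, by simp [hv]⟩
  set K := FractionRing Poly2
  set φA : Poly2 →+* K := algebraMap Poly2 K with hφA
  have hinj : Function.Injective φA := IsFractionRing.injective Poly2 K
  set φ : ℂ →+* K := φA.comp (C : ℂ →+* Poly2) with hφ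
  have hv' : φA v ≠ 0 := fun h => hv (hinj (by simpa using h))
  set t : K := φA u / φA v with ht
  set f : Polynomial ℂ := ∑ m ∈ F.support, Polynomial.C (coeff m F) * Polynomial.X ^ (m 0)
    with hf
  have hsupp : ∀ m ∈ F.support, m 0 + m 1 = e := fun m hm => supp_hom hF hm
  -- injectivity of m ↦ m 0 on the support
  have hinj0 : ∀ m ∈ F.support, ∀ m' ∈ F.support, m 0 = m' 0 → m = m' := by
    intro m hm m' hm' h01
    have h1 := hsupp m hm
    have h2 := hsupp m' hm'
    ext i
    fin_cases i
    · exact h01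
    · simpa using (by omega : m 1 = m' 1)
  have hfne : f ≠ 0 := by
    obtain ⟨m, hm⟩ := (support_nonempty.2 hFne)
    have hcoeff : f.coeff (m 0) = coeff m F := by
      rw [hf, Polynomial.finset_sum_coeff]
      rw [Finset.sum_eq_single m]
      · simp
      · intro m' hm' hne
        rw [Polynomial.coeff_C_mul, Polynomial.coeff_X_pow, if_neg, mul_zero]
        exact fun heq => hne (hinj0 m' hm' m hm heq.symm)
      · intro h; exact absurd hm h
    intro h0f
    rw [h0f, Polynomial.coeff_zero] at hcoeff
    exact mem_support_iff.mp hm hcoeff.symm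
  have hexp : pcomp F u v = ∑ m ∈ F.support, C (coeff m F) * u ^ m 0 * v ^ m 1 := by
    conv_lhs => rw [F.as_sum]
    rw [pcomp, map_sum]
    exact Finset.sum_congr rfl fun m _ => pcomp_monomial m _ u v
  have hroot : Polynomial.eval₂ φ t f = 0 := by
    have hmain : Polynomial.eval₂ φ t f * (φA v) ^ e = 0 := by
      have heq : Polynomial.eval₂ φ t f * (φA v) ^ e = φA (pcomp F u v) := by
        rw [hf, Polynomial.eval₂_finset_sum, Finset.sum_mul, hexp, map_sum]
        refine Finset.sum_congr rfl fun m hm => ?_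
        rw [Polynomial.eval₂_mul, Polynomial.eval₂_C, Polynomial.eval₂_X_pow]
        have hme := hsupp m hm
        rw [ht, div_pow]
        simp only [map_mul, map_pow, hφ, RingHom.comp_apply]
        rw [← hme, pow_add]
        rw [mul_assoc, ← mul_assoc (_ / _), div_mul_cancel₀ _ (pow_ne_zero _ hv')]
        ring
      rw [heq, h0, map_zero]
    rcases mul_eq_zero.mp hmain with h | h
    · exact h
    · exact absurd h (pow_ne_zero _ hv')
  have hsplits : Polynomial.Splits f := IsAlgClosed.splits f
  have hfac := hsplits.eq_prod_roots
  have happ := congrArg (Polynomial.eval₂RingHom φ t) hfac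
  rw [Polynomial.coe_eval₂RingHom] at happ
  rw [hroot] at happ
  rw [Polynomial.eval₂_mul, Polynomial.eval₂_C] at happ
  have hprod : Polynomial.eval₂ φ t (Multiset.map (fun a => Polynomial.X - Polynomial.C a)
      f.roots).prod = (Multiset.map (fun a => t - φ a) f.roots).prod := by
    rw [← Polynomial.coe_eval₂RingHom, map_multiset_prod, Multiset.map_map]
    congr 1
    apply Multiset.map_congr rfl
    intro a ha
    simp
  rw [hprod] at happ
  have hlc : φ f.leadingCoeff ≠ 0 :=
    fun h => (Polynomial.leadingCoeff_ne_zero.mpr hfne) (φ.injective (by rw [h, map_zero]))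
  have hpz : (Multiset.map (fun a => t - φ a) f.roots).prod = 0 := by
    rcases mul_eq_zero.mp happ.symm with h | h
    · exact absurd h hlc
    · exact h
  obtain ⟨r, hr, hrz⟩ := Multiset.mem_map.mp (Multiset.prod_eq_zero_iff.mp hpz)
  have htr : t = φ r := sub_eq_zero.mp hrz
  have h5 : φA u / φA v = φ r := by rw [← ht]; exact htr
  have hu : φA u = φ r * φA v := (div_eq_iff hv').mp h5
  have h6 : φA (C (1:ℂ) * u) = φA (C r * v) := by
    simp only [map_mul, map_one, one_mul]
    exact hu
  exact ⟨r, 1, Or.inr one_ne_zero, hinj h6⟩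


end RegAux

/-- For a regular polynomial automorphism `f` of `ℂ²` of degree `d`, one has `deg fⁿ = dⁿ`
for all `n ≥ 1`; in particular the first dynamical degree equals `d > 1`. -/
theorem degree_iterates_regular (P Q P' Q' : Poly2)
    (hinv : IsInverseQuad P Q P' Q') (hreg : IsRegularQuad P Q P' Q') :
    (∀ n : ℕ, 1 ≤ n → degIter P Q n = degPair P Q ^ n) ∧
    Tendsto (fun n : ℕ => (degIter P Q n : ℝ) ^ ((n : ℝ)⁻¹)) atTop
      (nhds (degPair P Q : ℝ)) ∧
    1 < degPair P Q := by
  obtain ⟨hinv1, hinv2⟩ := hinv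
  obtain ⟨hd2, he2, hregpt⟩ := hreg
  have hdP : P.totalDegree ≤ degPair P Q := le_max_left _ _
  have hdQ : Q.totalDegree ≤ degPair P Q := le_max_right _ _
  have hdP' : P'.totalDegree ≤ degPair P' Q' := le_max_left _ _
  have hdQ' : Q'.totalDegree ≤ degPair P' Q' := le_max_right _ _
  set d := degPair P Q with hdd
  set e := degPair P' Q' with hee
  have h1d : 1 ≤ d := by omega
  have h1e : 1 ≤ e := by omega
  -- polynomial identities from the inverse property
  have hid1 : pcomp P' P Q = X 0 := by
    apply MvPolynomial.funext
    intro x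
    have h := congrArg Prod.fst (hinv1 (x 0, x 1))
    simp only [evalPair] at h
    rw [RegAux.vec_eta x] at h
    rw [RegAux.eval_pcomp, eval_X]
    exact h
  have hid2 : pcomp Q' P Q = X 1 := by
    apply MvPolynomial.funext
    intro x
    have h := congrArg Prod.snd (hinv1 (x 0, x 1))
    simp only [evalPair] at h
    rw [RegAux.vec_eta x] at h
    rw [RegAux.eval_pcomp, eval_X]
    exact h
  -- vanishing of top compositions
  have htop1 : pcomp (homogeneousComponent e P') (homogeneousComponent d P)
      (homogeneousComponent d Q) = 0 := by
    have hkey := (RegAux.pcomp_top P' P Q h1e h1d hdP' hdP hdQ).1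
    rw [hid1, homogeneousComponent_eq_zero _ _ (by rw [totalDegree_X]; nlinarith)] at hkey
    exact hkey.symm
  have htop2 : pcomp (homogeneousComponent e Q') (homogeneousComponent d P)
      (homogeneousComponent d Q) = 0 := by
    have hkey := (RegAux.pcomp_top Q' P Q h1e h1d hdQ' hdP hdQ).1
    rw [hid2, homogeneousComponent_eq_zero _ _ (by rw [totalDegree_X]; nlinarith)] at hkey
    exact hkey.symm
  -- one of the top parts of (P, Q) is nonzero, same for (P', Q')
  have hdmax : d = max P.totalDegree Q.totalDegree := hdd
  have hemax : e = max P'.totalDegree Q'.totalDegree := hee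
  have hPQtop : homogeneousComponent d P ≠ 0 ∨ homogeneousComponent d Q ≠ 0 := by
    rcases max_choice P.totalDegree Q.totalDegree with h | h
    · left
      have e1 : d = P.totalDegree := by rw [hdmax, h]
      have hPne : P ≠ 0 := by
        intro h0
        rw [h0, totalDegree_zero] at e1
        omega
      rw [e1]; exact RegAux.hc_totalDegree_ne_zero hPne
    · right
      have e1 : d = Q.totalDegree := by rw [hdmax, h]
      have hQne : Q ≠ 0 := by
        intro h0
        rw [h0, totalDegree_zero] at e1
        omega
      rw [e1]; exact RegAux.hc_totalDegree_ne_zero hQne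
  have hP'Q'top : homogeneousComponent e P' ≠ 0 ∨ homogeneousComponent e Q' ≠ 0 := by
    rcases max_choice P'.totalDegree Q'.totalDegree with h | h
    · left
      have e1 : e = P'.totalDegree := by rw [hemax, h]
      have hPne : P' ≠ 0 := by
        intro h0
        rw [h0, totalDegree_zero] at e1
        omega
      rw [e1]; exact RegAux.hc_totalDegree_ne_zero hPne
    · right
      have e1 : e = Q'.totalDegree := by rw [hemax, h]
      have hQne : Q' ≠ 0 := by
        intro h0
        rw [h0, totalDegree_zero] at e1
        omega
      rw [e1]; exact RegAux.hc_totalDegree_ne_zero hQne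
  -- linear dependence of the top parts of (P, Q)
  obtain ⟨a₀, b₀, hab₀, hdep⟩ :
      ∃ a b : ℂ, (a ≠ 0 ∨ b ≠ 0) ∧
        C b * homogeneousComponent d P = C a * homogeneousComponent d Q := by
    rcases hP'Q'top with h | h
    · exact RegAux.homog_dep (homogeneousComponent_isHomogeneous e P') h htop1
    · exact RegAux.homog_dep (homogeneousComponent_isHomogeneous e Q') h htop2
  obtain ⟨a, b, H, hab, hH, hPd, hQd⟩ :
      ∃ (a b : ℂ) (H : Poly2), (a ≠ 0 ∨ b ≠ 0) ∧ H.IsHomogeneous d ∧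
        homogeneousComponent d P = C a * H ∧ homogeneousComponent d Q = C b * H := by
    by_cases ha : a₀ = 0
    · have hb : b₀ ≠ 0 := hab₀.resolve_left (not_not_intro ha)
      have hP0 : homogeneousComponent d P = 0 := by
        have h1 : C b₀ * homogeneousComponent d P = 0 := by
          rw [hdep, ha, map_zero, zero_mul]
        rcases mul_eq_zero.mp h1 with h | h
        · exact absurd (C_eq_zero.mp h) hb
        · exact h
      exact ⟨0, 1, homogeneousComponent d Q, Or.inr one_ne_zero,
        homogeneousComponent_isHomogeneous d Q, by rw [hP0, map_zero, zero_mul], by simp⟩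
    · refine ⟨a₀, b₀, C a₀⁻¹ * homogeneousComponent d P, Or.inl ha, ?_, ?_, ?_⟩
      · simpa using (homogeneousComponent_isHomogeneous d P).C_mul a₀⁻¹
      · rw [← mul_assoc, ← map_mul, mul_inv_cancel₀ ha, map_one, one_mul]
      · rw [mul_left_comm, hdep, mul_left_comm, ← mul_assoc, ← map_mul,
          mul_inv_cancel₀ ha, map_one, one_mul]
  have hHne : H ≠ 0 := by
    intro h0
    rcases hPQtop with h | h
    · exact h (by rw [hPd, h0, mul_zero])
    · exact h (by rw [hQd, h0, mul_zero])
  have hne : ((a : ℂ), (b : ℂ)) ≠ ((0 : ℂ), (0 : ℂ)) := by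
    intro hcon
    rw [Prod.mk.injEq] at hcon
    rcases hab with h | h
    · exact h hcon.1
    · exact h hcon.2
  -- the inverse's top parts vanish at (a, b)
  have hP'ab : evalHom e P' a b = 0 := by
    have h7 : pcomp (homogeneousComponent e P') (C a * H) (C b * H) = 0 := by
      rw [← hPd, ← hQd]; exact htop1
    rw [RegAux.pcomp_homog_Cmul (homogeneousComponent_isHomogeneous e P') a b H] at h7
    rcases mul_eq_zero.mp h7 with h | h
    · exact C_eq_zero.mp h
    · exact absurd ((pow_eq_zero_iff (by omega : e ≠ 0)).mp h) hHne
  have hQ'ab : evalHom e Q' a b = 0 := by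
    have h7 : pcomp (homogeneousComponent e Q') (C a * H) (C b * H) = 0 := by
      rw [← hPd, ← hQd]; exact htop2
    rw [RegAux.pcomp_homog_Cmul (homogeneousComponent_isHomogeneous e Q') a b H] at h7
    rcases mul_eq_zero.mp h7 with h | h
    · exact C_eq_zero.mp h
    · exact absurd ((pow_eq_zero_iff (by omega : e ≠ 0)).mp h) hHne
  -- regularity: H does not vanish at (a, b)
  have hlam : eval ![a, b] H ≠ 0 := by
    intro h0
    refine hregpt a b hne ⟨?_, ?_, hP'ab, hQ'ab⟩
    · show eval ![a, b] (homogeneousComponent d P) = 0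
      rw [hPd, map_mul, eval_C, h0, mul_zero]
    · show eval ![a, b] (homogeneousComponent d Q) = 0
      rw [hQd, map_mul, eval_C, h0, mul_zero]
  -- auxiliary facts for iterates
  have hX : (![X 0, X 1] : Fin 2 → Poly2) = X := funext fun i => by fin_cases i <;> simp
  have hpc : ∀ G : Poly2, pcomp G (X 0) (X 1) = G := by
    intro G
    unfold pcomp
    rw [hX, aeval_X_left_apply]
  -- the main induction
  have main : ∀ n : ℕ, 1 ≤ n →
      (iterPair P Q n).1.totalDegree ≤ d ^ n ∧ (iterPair P Q n).2.totalDegree ≤ d ^ n ∧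
      ∃ u : Poly2, u ≠ 0 ∧ u.IsHomogeneous (d ^ n) ∧
        homogeneousComponent (d ^ n) (iterPair P Q n).1 = C a * u ∧
        homogeneousComponent (d ^ n) (iterPair P Q n).2 = C b * u := by
    intro n hn
    induction n, hn using Nat.le_induction with
    | base =>
      have hiter1 : iterPair P Q 1 = (P, Q) := by
        show (pcomp P (X 0) (X 1), pcomp Q (X 0) (X 1)) = (P, Q)
        rw [hpc, hpc]
      rw [hiter1]
      exact ⟨by simpa using hdP, by simpa using hdQ, H, hHne, by simpa using hH,
        by simpa using hPd, by simpa using hQd⟩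
    | succ n hn ih =>
      obtain ⟨hdeg1, hdeg2, u, hu0, huh, hu1, hu2⟩ := ih
      have hdn : 1 ≤ d ^ n := Nat.one_le_pow _ _ (by omega)
      have t1 := RegAux.pcomp_top P (iterPair P Q n).1 (iterPair P Q n).2 h1d hdn hdP hdeg1 hdeg2
      have t2 := RegAux.pcomp_top Q (iterPair P Q n).1 (iterPair P Q n).2 h1d hdn hdQ hdeg1 hdeg2
      have hCmul : ∀ (c : ℂ) (G R S : Poly2), pcomp (C c * G) R S = C c * pcomp G R S := by
        intro c G R S
        unfold pcomp
        rw [map_mul, aeval_C, algebraMap_eq]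
      refine ⟨?_, ?_, C (eval ![a, b] H) * u ^ d,
        mul_ne_zero (fun h => hlam (C_eq_zero.mp h)) (pow_ne_zero _ hu0), ?_, ?_, ?_⟩
      · show (pcomp P (iterPair P Q n).1 (iterPair P Q n).2).totalDegree ≤ d ^ (n + 1)
        rw [pow_succ']
        exact t1.2
      · show (pcomp Q (iterPair P Q n).1 (iterPair P Q n).2).totalDegree ≤ d ^ (n + 1)
        rw [pow_succ']
        exact t2.2
      · have hhom := (isHomogeneous_C (Fin 2) (eval ![a, b] H)).mul (huh.pow d)
        rw [zero_add] at hhom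
        rw [show d ^ (n + 1) = d ^ n * d from pow_succ d n]
        exact hhom
      · show homogeneousComponent (d ^ (n + 1)) (pcomp P (iterPair P Q n).1 (iterPair P Q n).2)
          = C a * (C (eval ![a, b] H) * u ^ d)
        rw [pow_succ', t1.1, hu1, hu2, hPd, hCmul, RegAux.pcomp_homog_Cmul hH a b u]
      · show homogeneousComponent (d ^ (n + 1)) (pcomp Q (iterPair P Q n).1 (iterPair P Q n).2)
          = C b * (C (eval ![a, b] H) * u ^ d)
        rw [pow_succ', t2.1, hu1, hu2, hQd, hCmul, RegAux.pcomp_homog_Cmul hH a b u]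
  -- conclusion on degrees
  have hdeg : ∀ n : ℕ, 1 ≤ n → degIter P Q n = d ^ n := by
    intro n hn
    obtain ⟨hle1, hle2, u, hu0, huh, hu1, hu2⟩ := main n hn
    have hattain : ∀ (p : Poly2) (c : ℂ), c ≠ 0 → p.totalDegree ≤ d ^ n →
        homogeneousComponent (d ^ n) p = C c * u → p.totalDegree = d ^ n := by
      intro p c hc hle hhc
      refine le_antisymm hle (not_lt.mp fun hlt => ?_)
      rw [homogeneousComponent_eq_zero _ _ hlt] at hhc
      exact (mul_ne_zero (fun h => hc (C_eq_zero.mp h)) hu0) hhc.symm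
    show max (iterPair P Q n).1.totalDegree (iterPair P Q n).2.totalDegree = d ^ n
    rcases hab with ha | hb
    · rw [hattain _ a ha hle1 hu1]
      exact max_eq_left hle2
    · rw [hattain _ b hb hle2 hu2]
      exact max_eq_right hle1
  refine ⟨hdeg, ?_, by omega⟩
  have hev : (fun n : ℕ => ((degIter P Q n : ℝ)) ^ ((n : ℝ)⁻¹)) =ᶠ[atTop]
      (fun _ : ℕ => (d : ℝ)) := by
    filter_upwards [eventually_ge_atTop 1] with n hn
    rw [hdeg n hn]
    have hd0 : (0 : ℝ) ≤ (d : ℝ) := by positivity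
    rw [Nat.cast_pow, ← Real.rpow_natCast ((d : ℝ)) n, ← Real.rpow_mul hd0,
      mul_inv_cancel₀ (Nat.cast_ne_zero.mpr (by omega)), Real.rpow_one]
  exact Tendsto.congr' hev.symm tendsto_const_nhds
end
end
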